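/- arXiv:1610.01962 — 10 statements merged into one kernel-verified Lean document; each statement's English description precedes it below -/
import Mathlib

section
/- If f : Π² → closure(Π) is a holomorphic Pick function of two variables that is homogeneous of degree one (f(wz₁, wz₂) = w·f(z₁,z₂) whenever (z₁,z₂) and (wz₁,wz₂) lie in Π²), and η is defined by η(w) = e^{is} f(−e^{−is}/w, −e^{−is}) whenever (−e^{−is}/w, −e^{−is}) ∈ Π², then η is well-defined (independent of s), and both w ↦ η(w) and w ↦ −w·η(w) are Pick functions of one variable (holomorphic maps Π → closure(Π)). -/
open Complex Set

noncomputable section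

/-- The open upper half-plane Π. -/
def UHP : Set ℂ := {z : ℂ | 0 < z.im}

section AuxS0
open Real

namespace S0

noncomputable def E (a : ℝ) : ℂ := Complex.exp ((a : ℂ) * I)

lemma E_mul_E (a b : ℝ) : E a * E b = E (a + b) := by
  rw [E, E, E, ← Complex.exp_add]; push_cast; ring_nf

lemma E_im (a : ℝ) : (E a).im = Real.sin a := Complex.exp_ofReal_mul_I_im a

lemma E_ne_zero (a : ℝ) : E a ≠ 0 := Complex.exp_ne_zero _

lemma E_zero : E 0 = 1 := by simp [E]

lemma E_pi : E π = -1 := by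
  rw [E]; exact_mod_cast Complex.exp_pi_mul_I

lemma neg_exp (s : ℝ) : -Complex.exp (-(s:ℂ) * I) = E (π - s) := by
  have : (π - s : ℝ) = π + (-s) := by ring
  rw [this, ← E_mul_E, E_pi]
  rw [E]; push_cast; ring_nf

lemma E_eq (s : ℝ) : Complex.exp ((s:ℂ) * I) = E s := rfl

lemma mem_UHP {z : ℂ} : z ∈ UHP ↔ 0 < z.im := Iff.rfl

lemma E_mem {a : ℝ} (h : 0 < Real.sin a) : E a ∈ UHP := by
  simpa [mem_UHP, E_im] using h

lemma contE : Continuous E :=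
  Complex.continuous_exp.comp (Complex.continuous_ofReal.mul continuous_const)

lemma ofReal_mul_im (x : ℝ) (z : ℂ) : ((x:ℂ) * z).im = x * z.im := by simp

lemma ofReal_mul_mem {x : ℝ} (hx : 0 < x) {z : ℂ} (hz : z ∈ UHP) : (x:ℂ) * z ∈ UHP := by
  simp only [mem_UHP, ofReal_mul_im] at *
  positivity

lemma UHP_ne_zero {w : ℂ} (hw : w ∈ UHP) : w ≠ 0 := by
  intro h; rw [mem_UHP, h] at hw; simp at hw

/-- arg of a point of UHP lies in (0, π). -/
lemma arg_mem {w : ℂ} (hw : w ∈ UHP) : w.arg ∈ Ioo 0 π := by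
  rw [mem_UHP] at hw
  constructor
  · rcases lt_or_eq_of_le (Complex.arg_nonneg_iff.mpr hw.le) with h | h
    · exact h
    · exfalso
      have := Complex.sin_arg w
      rw [← h] at this
      simp at this
      have : w.im = 0 := by
        have habs : ‖w‖ ≠ 0 := by
          simp [norm_ne_zero_iff]
          exact UHP_ne_zero hw
        field_simp at this
        simpa using this.symm
      linarith
  · exact Complex.arg_lt_pi_iff.mpr (Or.inr (ne_of_gt hw))

/-- polar decomposition -/
lemma polar (w : ℂ) : ((‖w‖ : ℝ) : ℂ) * E w.arg = w :=
  Complex.norm_mul_exp_arg_mul_I w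

lemma E_div (r θ a : ℝ) (hr : 0 < r) :
    E a / ((r:ℂ) * E θ) = ((r⁻¹ : ℝ) : ℂ) * E (a - θ) := by
  have h1 : ((r:ℂ)) ≠ 0 := by exact_mod_cast ne_of_gt hr
  rw [div_eq_iff (mul_ne_zero h1 (E_ne_zero θ))]
  rw [mul_mul_mul_comm, ← Complex.ofReal_mul, inv_mul_cancel₀ (ne_of_gt hr), E_mul_E,
    sub_add_cancel]
  norm_num

lemma exists_polar {w : ℂ} (hw : w ∈ UHP) :
    ∃ r θ : ℝ, 0 < r ∧ θ ∈ Ioo 0 π ∧ w = (r:ℂ) * E θ := by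
  refine ⟨‖w‖, w.arg, ?_, arg_mem hw, (polar w).symm⟩
  simpa using norm_pos_iff.mpr (UHP_ne_zero hw)



namespace Part2

variable {f : ℂ → ℂ → ℂ}

/-- The core well-definedness identity, phrased with `E`. -/
lemma wd' (hf_hom : ∀ w z₁ z₂ : ℂ, z₁ ∈ UHP → z₂ ∈ UHP → w * z₁ ∈ UHP → w * z₂ ∈ UHP →
      f (w * z₁) (w * z₂) = w * f z₁ z₂)
    {s s' : ℝ} {w : ℂ}
    (m1 : E (π - s) / w ∈ UHP) (m2 : E (π - s) ∈ UHP)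
    (m3 : E (π - s') / w ∈ UHP) (m4 : E (π - s') ∈ UHP) :
    E s * f (E (π - s) / w) (E (π - s)) = E s' * f (E (π - s') / w) (E (π - s')) := by
  have e2 : E (s' - s) * E (π - s') = E (π - s) := by
    rw [E_mul_E]; congr 1; ring
  have e1 : E (s' - s) * (E (π - s') / w) = E (π - s) / w := by
    rw [← mul_div_assoc, e2]
  have key := hf_hom (E (s' - s)) (E (π - s') / w) (E (π - s')) m3 m4
    (by rw [e1]; exact m1) (by rw [e2]; exact m2)
  rw [e1, e2] at key
  rw [key, ← mul_assoc, E_mul_E]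
  congr 2
  ring

/-- The canonical choice of angle. -/
noncomputable def sig (w : ℂ) : ℝ := (π - w.arg) / 2

noncomputable def eta (f : ℂ → ℂ → ℂ) (w : ℂ) : ℂ :=
  E (sig w) * f (E (π - sig w) / w) (E (π - sig w))

lemma E_div_w {w : ℂ} (hw : w ∈ UHP) (a : ℝ) :
    E a / w = (((‖w‖)⁻¹ : ℝ) : ℂ) * E (a - w.arg) := by
  have hr : (0:ℝ) < ‖w‖ := by
    simpa using norm_pos_iff.mpr (UHP_ne_zero hw)
  conv_lhs => rw [show w = ((‖w‖ : ℝ) : ℂ) * E w.arg from (polar w).symm]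
  exact E_div _ _ _ hr

lemma mul_E_w {w : ℂ} (hw : w ∈ UHP) (a : ℝ) :
    w * E a = ((‖w‖ : ℝ) : ℂ) * E (w.arg + a) := by
  conv_lhs => rw [show w = ((‖w‖ : ℝ) : ℂ) * E w.arg from (polar w).symm]
  rw [mul_assoc, E_mul_E]

lemma sin_sig_pos {w : ℂ} (hw : w ∈ UHP) : 0 < Real.sin (sig w) := by
  obtain ⟨h1, h2⟩ := arg_mem hw
  apply Real.sin_pos_of_pos_of_lt_pi
  · rw [sig]; linarith
  · rw [sig]; linarith [Real.pi_pos]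

lemma sig_mem₁ {w : ℂ} (hw : w ∈ UHP) : E (π - sig w) ∈ UHP :=
  E_mem (by rw [Real.sin_pi_sub]; exact sin_sig_pos hw)

lemma sig_mem₂ {w : ℂ} (hw : w ∈ UHP) : E (π - sig w) / w ∈ UHP := by
  rw [E_div_w hw]
  have hr : (0:ℝ) < (‖w‖)⁻¹ := by
    simpa using norm_pos_iff.mpr (UHP_ne_zero hw)
  refine ofReal_mul_mem hr (E_mem ?_)
  rw [show π - sig w - w.arg = sig w from by rw [sig]; ring]
  exact sin_sig_pos hw

/-- `η` agrees with the formula for any valid angle. -/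
lemma eta_eq (hf_hom : ∀ w z₁ z₂ : ℂ, z₁ ∈ UHP → z₂ ∈ UHP → w * z₁ ∈ UHP → w * z₂ ∈ UHP →
      f (w * z₁) (w * z₂) = w * f z₁ z₂)
    {w : ℂ} (hw : w ∈ UHP) {s : ℝ}
    (m3 : E (π - s) / w ∈ UHP) (m4 : E (π - s) ∈ UHP) :
    eta f w = E s * f (E (π - s) / w) (E (π - s)) :=
  wd' hf_hom (sig_mem₂ hw) (sig_mem₁ hw) m3 m4

lemma E_neg_pi : E (-π) = -1 := by
  have h : E (-π) * E π = 1 := by rw [E_mul_E]; simp [E_zero]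
  rw [E_pi] at h
  linear_combination -h

/-- The second key identity:  `f(e^{iu}, w e^{iu}) = e^{i(u-π)} (w · η(w))`. -/
lemma I2 (hf_hom : ∀ w z₁ z₂ : ℂ, z₁ ∈ UHP → z₂ ∈ UHP → w * z₁ ∈ UHP → w * z₂ ∈ UHP →
      f (w * z₁) (w * z₂) = w * f z₁ z₂)
    {w : ℂ} (hw : w ∈ UHP) {u : ℝ}
    (hu1 : 0 < Real.sin u) (hu2 : 0 < Real.sin (u + w.arg)) :
    f (E u) (w * E u) = E (u - π) * (w * eta f w) := by
  set r : ℝ := ‖w‖ with hr_def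
  set θ : ℝ := w.arg with hθ_def
  have hr : (0:ℝ) < r := by simpa [hr_def] using norm_pos_iff.mpr (UHP_ne_zero hw)
  set ρ : ℝ := Real.sqrt r with hρ_def
  have hρ : (0:ℝ) < ρ := Real.sqrt_pos.mpr hr
  have hρρ : ρ * ρ = r := Real.mul_self_sqrt hr.le
  set σ : ℝ := sig w with hσ_def
  have hσθ : σ = (π - θ) / 2 := rfl
  have hsinσ : 0 < Real.sin σ := sin_sig_pos hw
  -- the two reference points
  set p₁ : ℂ := ((ρ⁻¹ : ℝ) : ℂ) * E u with hp₁
  set p₂ : ℂ := ((ρ : ℝ) : ℂ) * E (u + θ) with hp₂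
  have hp₁m : p₁ ∈ UHP := ofReal_mul_mem (by positivity) (E_mem hu1)
  have hp₂m : p₂ ∈ UHP := ofReal_mul_mem hρ (E_mem hu2)
  -- Step A : f (E u) (w * E u) = ρ * f p₁ p₂
  have eA1 : ((ρ : ℝ) : ℂ) * p₁ = E u := by
    rw [hp₁, ← mul_assoc, ← Complex.ofReal_mul, mul_inv_cancel₀ (ne_of_gt hρ)]
    norm_num
  have eA2 : ((ρ : ℝ) : ℂ) * p₂ = w * E u := by
    rw [hp₂, ← mul_assoc, ← Complex.ofReal_mul, hρρ, mul_E_w hw, ← hθ_def, ← hr_def]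
    congr 1
    ring
  have stepA : f (E u) (w * E u) = ((ρ : ℝ) : ℂ) * f p₁ p₂ := by
    have := hf_hom ((ρ : ℝ) : ℂ) p₁ p₂ hp₁m hp₂m
      (by rw [eA1]; exact E_mem hu1)
      (by rw [eA2, mul_E_w hw, ← hθ_def]; exact ofReal_mul_mem hr (E_mem (by rwa [add_comm])))
    rwa [eA1, eA2] at this
  -- Step B : f (E (π-σ)/w) (E (π-σ)) = c * f p₁ p₂ with c = ρ⁻¹ E (σ - u)
  set c : ℂ := ((ρ⁻¹ : ℝ) : ℂ) * E (σ - u) with hc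
  have eB1 : c * p₁ = E (π - σ) / w := by
    rw [hc, hp₁, E_div_w hw, ← hθ_def, ← hr_def, mul_mul_mul_comm, ← Complex.ofReal_mul,
      E_mul_E]
    have h1 : ρ⁻¹ * ρ⁻¹ = r⁻¹ := by rw [← hρρ]; ring
    have h2 : σ - u + u = π - σ - θ := by rw [hσθ]; ring
    rw [h1, h2]
  have eB2 : c * p₂ = E (π - σ) := by
    rw [hc, hp₂, mul_mul_mul_comm, ← Complex.ofReal_mul, inv_mul_cancel₀ (ne_of_gt hρ),
      E_mul_E]
    have h2 : σ - u + (u + θ) = π - σ := by rw [hσθ]; ring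
    rw [h2]
    norm_num
  have stepB : f (E (π - σ) / w) (E (π - σ)) = c * f p₁ p₂ := by
    have := hf_hom c p₁ p₂ hp₁m hp₂m
      (by rw [eB1]; exact sig_mem₂ hw)
      (by rw [eB2]; exact sig_mem₁ hw)
    rwa [eB1, eB2] at this
  -- η in terms of f p₁ p₂
  have heta : eta f w = E σ * (c * f p₁ p₂) := by
    rw [eta, ← hσ_def, stepB]
  -- scalar identity
  have e0 : E (u - π) * E θ * E σ * E (σ - u) = 1 := by
    rw [E_mul_E, E_mul_E, E_mul_E,
      show u - π + θ + σ + (σ - u) = 0 from by rw [hσθ]; ring, E_zero]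
  have hrρc : ((r : ℝ) : ℂ) * ((ρ⁻¹ : ℝ) : ℂ) = ((ρ : ℝ) : ℂ) := by
    rw [← Complex.ofReal_mul]
    congr 1
    rw [← hρρ, mul_assoc, mul_inv_cancel₀ (ne_of_gt hρ), mul_one]
  have hsc : E (u - π) * (w * (E σ * c)) = ((ρ : ℝ) : ℂ) := by
    conv_lhs => rw [show w = ((r : ℝ) : ℂ) * E θ from by rw [hr_def, hθ_def]; exact (polar w).symm]
    rw [hc]
    linear_combination (((r : ℝ) : ℂ) * ((ρ⁻¹ : ℝ) : ℂ)) * e0 + hrρc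
  rw [stepA, heta]
  linear_combination (-(f p₁ p₂)) * hsc

/-- Continuity limit lemma. -/
lemma limit_key (g : ℝ → ℝ) (hg : Continuous g) (a b : ℝ) (hab : a < b)
    (h : ∀ s ∈ Ioo a b, 0 ≤ g s) : 0 ≤ g a := by
  have h1 : Filter.Tendsto g (nhdsWithin a (Ioi a)) (nhds (g a)) :=
    (hg.tendsto a).mono_left nhdsWithin_le_nhds
  refine ge_of_tendsto h1 ?_
  filter_upwards [Ioo_mem_nhdsGT_of_mem (left_mem_Ico.mpr hab)] with s hs using h s hs

end Part2

end S0
end AuxS0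


open S0 S0.Part2 Real in
/-- If `f` is a holomorphic Pick function of two variables, homogeneous of
degree one, then `η(w) = e^{is} f(-e^{-is}/w, -e^{-is})` is well-defined (independent of `s`)
and both `η` and `w ↦ -w·η(w)` are Pick functions of one variable. -/
theorem stmt0 (f : ℂ → ℂ → ℂ)
    (hf_hol : DifferentiableOn ℂ (fun p : ℂ × ℂ => f p.1 p.2) (UHP ×ˢ UHP))
    (hf_pick : ∀ z₁ z₂ : ℂ, z₁ ∈ UHP → z₂ ∈ UHP → 0 ≤ (f z₁ z₂).im)
    (hf_hom : ∀ w z₁ z₂ : ℂ, z₁ ∈ UHP → z₂ ∈ UHP → w * z₁ ∈ UHP → w * z₂ ∈ UHP →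
      f (w * z₁) (w * z₂) = w * f z₁ z₂) :
    -- well-definedness: the formula is independent of the choice of s
    (∀ (s s' : ℝ) (w : ℂ),
        (-Complex.exp (-(s : ℂ) * I) / w) ∈ UHP → (-Complex.exp (-(s : ℂ) * I)) ∈ UHP →
        (-Complex.exp (-(s' : ℂ) * I) / w) ∈ UHP → (-Complex.exp (-(s' : ℂ) * I)) ∈ UHP →
        Complex.exp ((s : ℂ) * I) * f (-Complex.exp (-(s : ℂ) * I) / w) (-Complex.exp (-(s : ℂ) * I))
          = Complex.exp ((s' : ℂ) * I) *
              f (-Complex.exp (-(s' : ℂ) * I) / w) (-Complex.exp (-(s' : ℂ) * I))) ∧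
    -- existence of the Pick function η given by the formula
    ∃ η : ℂ → ℂ,
      (∀ (s : ℝ) (w : ℂ), w ∈ UHP →
        (-Complex.exp (-(s : ℂ) * I) / w) ∈ UHP → (-Complex.exp (-(s : ℂ) * I)) ∈ UHP →
        η w = Complex.exp ((s : ℂ) * I) *
          f (-Complex.exp (-(s : ℂ) * I) / w) (-Complex.exp (-(s : ℂ) * I))) ∧
      DifferentiableOn ℂ η UHP ∧
      (∀ w ∈ UHP, 0 ≤ (η w).im) ∧
      (∀ w ∈ UHP, 0 ≤ (-(w * η w)).im) := by
  constructor
  · -- well-definedness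
    intro s s' w m1 m2 m3 m4
    rw [neg_exp s] at m1 m2
    rw [neg_exp s'] at m3 m4
    rw [neg_exp s, neg_exp s', E_eq s, E_eq s']
    exact wd' hf_hom m1 m2 m3 m4
  refine ⟨eta f, ?_, ?_, ?_, ?_⟩
  · -- defining property
    intro s w hw m1 m2
    rw [neg_exp s] at m1 m2 ⊢
    rw [E_eq s]
    exact eta_eq hf_hom hw m1 m2
  · -- differentiability
    intro w₀ hw₀
    set s₀ : ℝ := sig w₀ with hs₀
    have hUopen : IsOpen UHP := isOpen_lt continuous_const Complex.continuous_im
    have hcontOn : ContinuousOn (fun w : ℂ => E (π - s₀) / w) UHP :=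
      continuousOn_const.div continuousOn_id fun x hx => UHP_ne_zero hx
    set V : Set ℂ := UHP ∩ (fun w : ℂ => E (π - s₀) / w) ⁻¹' UHP with hV
    have hVopen : IsOpen V := hcontOn.isOpen_inter_preimage hUopen hUopen
    have hw₀V : w₀ ∈ V := ⟨hw₀, sig_mem₂ hw₀⟩
    have hF : DifferentiableOn ℂ (fun w => E s₀ * f (E (π - s₀) / w) (E (π - s₀))) V := by
      have h1 : DifferentiableOn ℂ (fun w : ℂ => (E (π - s₀) / w, E (π - s₀))) V :=
        DifferentiableOn.prodMk
          (DifferentiableOn.div (differentiableOn_const _) differentiableOn_id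
            fun x hx => UHP_ne_zero hx.1)
          (differentiableOn_const _)
      have h2 : DifferentiableOn ℂ
          ((fun p : ℂ × ℂ => f p.1 p.2) ∘ fun w : ℂ => (E (π - s₀) / w, E (π - s₀))) V :=
        hf_hol.comp h1 fun x hx => Set.mk_mem_prod hx.2 (sig_mem₁ hw₀)
      exact h2.const_mul _
    have hev : eta f =ᶠ[nhds w₀] fun w => E s₀ * f (E (π - s₀) / w) (E (π - s₀)) := by
      filter_upwards [hVopen.mem_nhds hw₀V] with x hx
      exact eta_eq hf_hom hx.1 hx.2 (sig_mem₁ hw₀)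
    have hd : DifferentiableAt ℂ (eta f) w₀ :=
      ((hF w₀ hw₀V).differentiableAt (hVopen.mem_nhds hw₀V)).congr_of_eventuallyEq hev
    exact hd.differentiableWithinAt
  · -- Im η ≥ 0
    intro w hw
    obtain ⟨hθ1, hθ2⟩ := arg_mem hw
    have habs : (0:ℝ) < (‖w‖)⁻¹ := by
      simpa using norm_pos_iff.mpr (UHP_ne_zero hw)
    have key : ∀ s ∈ Ioo (0:ℝ) (π - w.arg), 0 ≤ (E (-s) * eta f w).im := by
      intro s hs
      have hs1 : 0 < Real.sin s := Real.sin_pos_of_pos_of_lt_pi hs.1 (by linarith [hs.2])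
      have hs2 : 0 < Real.sin (s + w.arg) :=
        Real.sin_pos_of_pos_of_lt_pi (by linarith [hs.1]) (by linarith [hs.2])
      have m4 : E (π - s) ∈ UHP := E_mem (by rw [Real.sin_pi_sub]; exact hs1)
      have m3 : E (π - s) / w ∈ UHP := by
        rw [E_div_w hw]
        refine ofReal_mul_mem habs (E_mem ?_)
        rw [show π - s - w.arg = π - (s + w.arg) from by ring, Real.sin_pi_sub]
        exact hs2
      have he : E (-s) * eta f w = f (E (π - s) / w) (E (π - s)) := by
        rw [eta_eq hf_hom hw m3 m4, ← mul_assoc, E_mul_E,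
          show -s + s = 0 from by ring, E_zero, one_mul]
      rw [he]
      exact hf_pick _ _ m3 m4
    have hcont : Continuous fun s : ℝ => (E (-s) * eta f w).im :=
      Complex.continuous_im.comp ((contE.comp continuous_neg).mul continuous_const)
    have h0 := limit_key _ hcont 0 (π - w.arg) (by linarith) key
    simpa [E_zero] using h0
  · -- Im (-(w η)) ≥ 0
    intro w hw
    obtain ⟨hθ1, hθ2⟩ := arg_mem hw
    have habs : (0:ℝ) < ‖w‖ := by
      simpa using norm_pos_iff.mpr (UHP_ne_zero hw)
    have key : ∀ s ∈ Ioo (0:ℝ) (π - w.arg), 0 ≤ (E s * (-(w * eta f w))).im := by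
      intro s hs
      have hs1 : 0 < Real.sin s := Real.sin_pos_of_pos_of_lt_pi hs.1 (by linarith [hs.2])
      have hs2 : 0 < Real.sin (s + w.arg) :=
        Real.sin_pos_of_pos_of_lt_pi (by linarith [hs.1]) (by linarith [hs.2])
      have hI2 := I2 hf_hom hw hs1 hs2
      have he : E s * (-(w * eta f w)) = f (E s) (w * E s) := by
        rw [hI2, show s - π = s + -π from by ring, ← E_mul_E, E_neg_pi]
        ring
      rw [he]
      refine hf_pick _ _ (E_mem hs1) ?_
      rw [mul_E_w hw]
      exact ofReal_mul_mem habs (E_mem (by rwa [add_comm]))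
    have hcont : Continuous fun s : ℝ => (E s * (-(w * eta f w))).im :=
      Complex.continuous_im.comp (contE.mul continuous_const)
    have h0 := limit_key _ hcont 0 (π - w.arg) (by linarith) key
    simpa [E_zero] using h0
end
end

section
/- Let μ be a finite positive Borel measure on [−1,1] and define f on Π² by f(z₁,z₂) = 4·∫_{−1}^{1} z₁z₂ / ((1+t)z₁ + (1−t)z₂) dμ(t). Then f(z₁,z₂) = (μ₀ − μ₁)z₁ + (μ₀ + μ₁)z₂ + (z₂ − z₁)·g((z₁+z₂)/(z₂−z₁)) for all z ∈ Π² with z₁ ≠ z₂, where μ₀ = μ([−1,1]), μ₁ = ∫ t dμ(t), and g(ζ) = ∫_{−1}^{1} (1−t²)/(t−ζ) dμ(t). -/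
open Complex Set MeasureTheory

noncomputable section

/-- the integral representation `f(z₁,z₂) = 4∫ z₁z₂/((1+t)z₁+(1-t)z₂) dμ(t)`
can be rewritten as `(μ₀-μ₁)z₁ + (μ₀+μ₁)z₂ + (z₂-z₁)g((z₁+z₂)/(z₂-z₁))` on Π² off the
diagonal, where `g(ζ) = ∫ (1-t²)/(t-ζ) dμ(t)`. -/
theorem stmt3 (μ : Measure ℝ) [IsFiniteMeasure μ]
    (hsupp : μ (Set.Icc (-1 : ℝ) 1)ᶜ = 0)
    (z₁ z₂ : ℂ) (hz₁ : 0 < z₁.im) (hz₂ : 0 < z₂.im) (hne : z₁ ≠ z₂) :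
    (4 : ℂ) * ∫ t : ℝ, z₁ * z₂ / ((1 + (t : ℂ)) * z₁ + (1 - (t : ℂ)) * z₂) ∂μ
      = (((μ Set.univ).toReal : ℂ) - ((∫ t : ℝ, t ∂μ : ℝ) : ℂ)) * z₁
        + (((μ Set.univ).toReal : ℂ) + ((∫ t : ℝ, t ∂μ : ℝ) : ℂ)) * z₂
        + (z₂ - z₁) *
            ∫ t : ℝ, (1 - (t : ℂ) ^ 2) / ((t : ℂ) - (z₁ + z₂) / (z₂ - z₁)) ∂μ := by
  set ζ : ℂ := (z₁ + z₂) / (z₂ - z₁) with hζdef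
  clear_value ζ
  have hzz : z₂ - z₁ ≠ 0 := sub_ne_zero.mpr (Ne.symm hne)
  have hae : ∀ᵐ t ∂μ, t ∈ Set.Icc (-1 : ℝ) 1 := by
    rw [ae_iff]; exact hsupp
  -- the denominator is nonzero on [-1,1]
  have hD : ∀ t : ℝ, t ∈ Set.Icc (-1 : ℝ) 1 →
      (1 + (t : ℂ)) * z₁ + (1 - (t : ℂ)) * z₂ ≠ 0 := by
    intro t ht h0
    have him : ((1 + (t : ℂ)) * z₁ + (1 - (t : ℂ)) * z₂).im
        = (1 + t) * z₁.im + (1 - t) * z₂.im := by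
      simp [Complex.add_im, Complex.mul_im]
    have hpos : 0 < (1 + t) * z₁.im + (1 - t) * z₂.im := by
      rcases lt_or_ge t 1 with h | h
      · have h1 : 0 ≤ (1 + t) * z₁.im := mul_nonneg (by linarith [ht.1]) hz₁.le
        have h2 : 0 < (1 - t) * z₂.im := mul_pos (by linarith) hz₂
        linarith
      · have h1 : 0 < (1 + t) * z₁.im := mul_pos (by linarith [ht.1]) hz₁
        have h2 : 0 ≤ (1 - t) * z₂.im := mul_nonneg (by linarith [ht.2]) hz₂.le
        linarith
    rw [h0] at him
    simp only [Complex.zero_im] at him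
    linarith [him ▸ hpos]
  -- `t - ζ` never vanishes for t ∈ [-1,1]
  have hζt : ∀ t : ℝ, ((t : ℂ) - ζ) * (z₂ - z₁)
      = -((1 + (t : ℂ)) * z₁ + (1 - (t : ℂ)) * z₂) := by
    intro t
    rw [hζdef]; field_simp; ring
  have htζ : ∀ t : ℝ, t ∈ Set.Icc (-1 : ℝ) 1 → (t : ℂ) - ζ ≠ 0 := by
    intro t ht h
    have := hζt t
    rw [h, zero_mul] at this
    exact hD t ht (neg_eq_zero.mp this.symm)
  -- the pointwise key identity
  have key : ∀ t : ℝ, t ∈ Set.Icc (-1 : ℝ) 1 →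
      4 * (z₁ * z₂ / ((1 + (t : ℂ)) * z₁ + (1 - (t : ℂ)) * z₂))
        = ((z₁ + z₂) + (t : ℂ) * (z₂ - z₁))
          + (z₂ - z₁) * ((1 - (t : ℂ) ^ 2) / ((t : ℂ) - ζ)) := by
    intro t ht
    have hDt := hD t ht
    have h2 : (1 - (t:ℂ)^2) / ((t:ℂ) - ζ)
        = (1 - (t:ℂ)^2) * (z₂ - z₁) / (-((1 + (t : ℂ)) * z₁ + (1 - (t : ℂ)) * z₂)) := by
      rw [div_eq_div_iff (htζ t ht) (neg_ne_zero.mpr hDt)]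
      linear_combination (-(1 - (t:ℂ)^2)) * hζt t
    rw [h2, div_neg, mul_neg, mul_div_assoc]
    linear_combination (z₁ + z₂ + (t:ℂ) * (z₂ - z₁)) * mul_inv_cancel₀ hDt
  -- integrability facts
  have htR : Integrable (fun t : ℝ => t) μ := by
    refine Integrable.mono' (integrable_const (1 : ℝ))
      measurable_id.aestronglyMeasurable ?_
    filter_upwards [hae] with t ht
    rw [Real.norm_eq_abs]
    exact abs_le.mpr ⟨ht.1, ht.2⟩
  have htC : Integrable (fun t : ℝ => (t : ℂ)) μ := htR.ofReal
  have I1 : Integrable (fun t : ℝ => (z₁ + z₂) + (t : ℂ) * (z₂ - z₁)) μ :=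
    (integrable_const _).add (htC.mul_const _)
  -- the function g-integrand is bounded on [-1,1]
  have hcont : ContinuousOn (fun t : ℝ => (1 - (t : ℂ) ^ 2) / ((t : ℂ) - ζ))
      (Set.Icc (-1 : ℝ) 1) := by
    apply ContinuousOn.div
    · fun_prop
    · fun_prop
    · intro t ht; exact htζ t ht
  obtain ⟨C, hC⟩ := (isCompact_Icc.image_of_continuousOn hcont).isBounded.exists_norm_le
  have I2 : Integrable (fun t : ℝ => (1 - (t : ℂ) ^ 2) / ((t : ℂ) - ζ)) μ := by
    refine Integrable.mono' (integrable_const C) ?_ ?_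
    · exact (Measurable.div (by fun_prop) (by fun_prop)).aestronglyMeasurable
    · filter_upwards [hae] with t ht
      exact hC _ (Set.mem_image_of_mem _ ht)
  have I2' : Integrable (fun t : ℝ =>
      (z₂ - z₁) * ((1 - (t : ℂ) ^ 2) / ((t : ℂ) - ζ))) μ := I2.const_mul _
  -- main computation
  rw [← integral_const_mul]
  rw [integral_congr_ae (g := fun t : ℝ => ((z₁ + z₂) + (t : ℂ) * (z₂ - z₁))
      + (z₂ - z₁) * ((1 - (t : ℂ) ^ 2) / ((t : ℂ) - ζ)))
    (by filter_upwards [hae] with t ht; exact key t ht)]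
  have hint : (∫ a : ℝ, (a : ℂ) ∂μ) = ((∫ a : ℝ, a ∂μ : ℝ) : ℂ) := integral_ofReal
  rw [integral_add I1 I2', integral_add (integrable_const _) (htC.mul_const _),
    integral_const, integral_mul_const, integral_const_mul, hint]
  rw [Complex.real_smul, measureReal_def]
  ring
end
end

section
/- Let μ be a finite positive Borel measure on [−1,1], μ₀ = μ([−1,1]), μ₁ = ∫ t dμ(t), g(ζ) = ∫_{−1}^{1}(1−t²)/(t−ζ)dμ(t), and let f(z₁,z₂) = (μ₀−μ₁)z₁ + (μ₀+μ₁)z₂ + (z₂−z₁)·g((z₁+z₂)/(z₂−z₁)) on Π² (extended continuously to z₁ = z₂). If there is C > 0 with |f(z₁,z₂)| ≤ C·max(|z₁|,|z₂|) for all z ∈ Π², then g is bounded on ℂ \ [−1,1]. Conversely if g is bounded then such a C exists. -/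
open Complex Set MeasureTheory

noncomputable section

/-- with `f(z₁,z₂) = (μ₀-μ₁)z₁ + (μ₀+μ₁)z₂ + (z₂-z₁)g((z₁+z₂)/(z₂-z₁))`
on Π² (extended continuously by `f(z,z) = 2μ₀z` on the diagonal), `f` is linearly bounded
(|f(z)| ≤ C·max(|z₁|,|z₂|)) if and only if `g` is bounded on `ℂ \ [-1,1]`. -/
theorem stmt6 (μ : Measure ℝ) [IsFiniteMeasure μ]
    (hsupp : μ (Set.Icc (-1 : ℝ) 1)ᶜ = 0)
    (g : ℂ → ℂ)
    (hg : ∀ ζ : ℂ, ζ ∉ ((fun t : ℝ => (t : ℂ)) '' Set.Icc (-1 : ℝ) 1) →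
      g ζ = ∫ t : ℝ, (1 - (t : ℂ) ^ 2) / ((t : ℂ) - ζ) ∂μ)
    (f : ℂ → ℂ → ℂ)
    (hf : ∀ z₁ z₂ : ℂ, 0 < z₁.im → 0 < z₂.im → z₁ ≠ z₂ →
      f z₁ z₂ = (((μ Set.univ).toReal : ℂ) - ((∫ t : ℝ, t ∂μ : ℝ) : ℂ)) * z₁
        + (((μ Set.univ).toReal : ℂ) + ((∫ t : ℝ, t ∂μ : ℝ) : ℂ)) * z₂
        + (z₂ - z₁) * g ((z₁ + z₂) / (z₂ - z₁)))
    (hfdiag : ∀ z : ℂ, 0 < z.im →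
      f z z = 2 * ((μ Set.univ).toReal : ℂ) * z) :
    (∃ C : ℝ, 0 < C ∧ ∀ z₁ z₂ : ℂ, 0 < z₁.im → 0 < z₂.im →
        ‖f z₁ z₂‖ ≤ C * max ‖z₁‖ ‖z₂‖) ↔
    (∃ B : ℝ, ∀ ζ : ℂ, ζ ∉ ((fun t : ℝ => (t : ℂ)) '' Set.Icc (-1 : ℝ) 1) →
        ‖g ζ‖ ≤ B) := by
  set μ₀ : ℝ := (μ Set.univ).toReal with hμ₀def
  set μ₁ : ℝ := ∫ t : ℝ, t ∂μ with hμ₁def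
  have hμ₀nn : 0 ≤ μ₀ := ENNReal.toReal_nonneg
  set A : ℂ := (μ₀ : ℂ) - (μ₁ : ℂ) with hAdef
  set B' : ℂ := (μ₀ : ℂ) + (μ₁ : ℂ) with hBdef
  constructor
  · rintro ⟨C, hC, hCf⟩
    refine ⟨max ((C + ‖A‖ + ‖B'‖) * (3/2)) μ₀, ?_⟩
    intro ζ hζ
    rcases le_or_gt 2 (‖ζ‖) with hbig | hsmall
    · -- direct integral bound
      rw [hg ζ hζ]
      have hle : ‖∫ t : ℝ, (1 - (t : ℂ) ^ 2) / ((t : ℂ) - ζ) ∂μ‖ ≤ 1 * μ₀ := by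
        apply norm_integral_le_of_norm_le_const
        have hmem : ∀ᵐ t ∂μ, t ∈ Set.Icc (-1:ℝ) 1 := MeasureTheory.mem_ae_iff.mpr hsupp
        filter_upwards [hmem] with t ht
        rw [norm_div]
        have h1 : ‖1 - (t:ℂ)^2‖ ≤ 1 := by
          have he : ((1 - t^2 : ℝ) : ℂ) = 1 - (t:ℂ)^2 := by push_cast; ring
          rw [← he, Complex.norm_real, Real.norm_eq_abs]
          rw [_root_.abs_of_nonneg (by nlinarith [ht.1, ht.2] : (0:ℝ) ≤ 1 - t^2)]
          nlinarith [ht.1, ht.2]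
        have h2 : (1:ℝ) ≤ ‖(t:ℂ) - ζ‖ := by
          have h3 := norm_sub_norm_le ζ (t:ℂ)
          have ht' : ‖(t:ℂ)‖ ≤ 1 := by
            rw [Complex.norm_real, Real.norm_eq_abs]; exact abs_le.2 ⟨ht.1, ht.2⟩
          rw [norm_sub_rev] at h3
          linarith
        rw [div_le_one (by linarith)]
        linarith
      calc ‖∫ t : ℝ, (1 - (t : ℂ) ^ 2) / ((t : ℂ) - ζ) ∂μ‖ ≤ 1 * μ₀ := hle
        _ = μ₀ := one_mul _
        _ ≤ _ := le_max_right _ _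
    · -- test-point bound
      have key : ∀ w : ℂ, ‖w‖ = 1 → 0 < ((ζ - 1) * w).im → 0 < ((ζ + 1) * w).im →
          ‖g ζ‖ ≤ (C + ‖A‖ + ‖B'‖) * (3/2) := by
        intro w hw h1 h2
        set z₁ : ℂ := (ζ - 1) * w / 2 with hz₁
        set z₂ : ℂ := (ζ + 1) * w / 2 with hz₂
        have hwne : w ≠ 0 := by intro h; rw [h] at hw; simp at hw
        have him1 : 0 < z₁.im := by
          rw [hz₁]
          have : ((ζ - 1) * w / 2).im = ((ζ - 1) * w).im / 2 := by
            rw [Complex.div_im]; simp [Complex.normSq]; ring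
          rw [this]; linarith
        have him2 : 0 < z₂.im := by
          rw [hz₂]
          have : ((ζ + 1) * w / 2).im = ((ζ + 1) * w).im / 2 := by
            rw [Complex.div_im]; simp [Complex.normSq]; ring
          rw [this]; linarith
        have hsub : z₂ - z₁ = w := by rw [hz₁, hz₂]; ring
        have hne : z₁ ≠ z₂ := by
          intro h; apply hwne; rw [← hsub, h]; ring
        have hrat : (z₁ + z₂) / (z₂ - z₁) = ζ := by
          rw [hsub, hz₁, hz₂]
          field_simp
          ring
        have hfe := hf z₁ z₂ him1 him2 hne
        rw [hrat, hsub] at hfe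
        have heq : w * g ζ = f z₁ z₂ - A * z₁ - B' * z₂ := by
          rw [hfe, hAdef, hBdef]; ring
        have habs1 : ‖z₁‖ ≤ 3/2 := by
          have ht : ‖ζ - 1‖ ≤ ‖ζ‖ + 1 := by
            have := norm_sub_le ζ (1:ℂ)
            simpa using this
          rw [hz₁, norm_div, norm_mul, hw, mul_one, Complex.norm_two]
          linarith
        have habs2 : ‖z₂‖ ≤ 3/2 := by
          have ht : ‖ζ + 1‖ ≤ ‖ζ‖ + 1 := by
            have := norm_add_le ζ (1:ℂ)
            simpa using this
          rw [hz₂, norm_div, norm_mul, hw, mul_one, Complex.norm_two]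
          linarith
        have hmax : max (‖z₁‖) (‖z₂‖) ≤ 3/2 := max_le habs1 habs2
        have hb := hCf z₁ z₂ him1 him2
        have hgw : ‖g ζ‖ = ‖w * g ζ‖ := by rw [norm_mul, hw, one_mul]
        rw [hgw, heq]
        calc ‖f z₁ z₂ - A * z₁ - B' * z₂‖
            ≤ ‖f z₁ z₂‖ + ‖A * z₁‖ + ‖B' * z₂‖ := by
              have t1 := norm_sub_le (f z₁ z₂ - A * z₁) (B' * z₂)
              have t2 := norm_sub_le (f z₁ z₂) (A * z₁)
              linarith
          _ ≤ C * (3/2) + ‖A‖ * (3/2) + ‖B'‖ * (3/2) := by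
              rw [norm_mul, norm_mul]
              have := norm_nonneg A
              have := norm_nonneg B'
              have h4 : ‖f z₁ z₂‖ ≤ C * (3/2) := le_trans hb (by nlinarith)
              nlinarith
          _ = (C + ‖A‖ + ‖B'‖) * (3/2) := by ring
      have hgoal : ‖g ζ‖ ≤ (C + ‖A‖ + ‖B'‖) * (3/2) := by
        rcases lt_trichotomy ζ.im 0 with hlt | heq0 | hgt
        · exact key (-1) (by simp) (by simp; linarith) (by simp; linarith)
        · have hre : ζ.re ∉ Set.Icc (-1:ℝ) 1 := by
            intro h
            exact hζ ⟨ζ.re, h, by apply Complex.ext <;> simp [heq0]⟩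
          rw [Set.mem_Icc] at hre
          push_neg at hre
          rcases le_or_gt ζ.re (-1) with h' | h'
          · have h'' : ζ.re < -1 := by
              rcases lt_or_eq_of_le h' with h | h
              · exact h
              · exfalso; rcases lt_or_ge ζ.re 1 with h3 | h3
                · exact absurd (hre (by linarith)) (by linarith)
                · linarith [hre (by linarith)]
            exact key (-I) (by simp) (by simp [Complex.mul_im]; linarith)
              (by simp [Complex.mul_im]; linarith)
          · have h'' : 1 < ζ.re := hre (by linarith)
            exact key I (by simp) (by simp [Complex.mul_im]; linarith)
              (by simp [Complex.mul_im]; linarith)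
        · exact key 1 (by simp) (by simp; linarith) (by simp; linarith)
      exact le_trans hgoal (le_max_left _ _)
  · rintro ⟨Bd, hBd⟩
    have hBd0 : 0 ≤ Bd := by
      have hI : (Complex.I) ∉ ((fun t : ℝ => (t : ℂ)) '' Set.Icc (-1 : ℝ) 1) := by
        rintro ⟨t, _, h⟩
        have := congrArg Complex.im h
        simp at this
      exact le_trans (norm_nonneg _) (hBd I hI)
    refine ⟨2 * μ₀ + 2 * |μ₁| + 2 * Bd + 1, by positivity, ?_⟩
    intro z₁ z₂ h1 h2
    by_cases hzz : z₁ = z₂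
    · subst hzz
      rw [hfdiag z₁ h1]
      rw [norm_mul, norm_mul, Complex.norm_two, Complex.norm_real, Real.norm_eq_abs,
        _root_.abs_of_nonneg hμ₀nn, max_self]
      have := norm_nonneg z₁
      nlinarith [abs_nonneg μ₁]
    · have hsubne : z₂ - z₁ ≠ 0 := sub_ne_zero.2 (Ne.symm hzz)
      have hζ : (z₁ + z₂) / (z₂ - z₁) ∉ ((fun t : ℝ => (t : ℂ)) '' Set.Icc (-1 : ℝ) 1) := by
        rintro ⟨t, ht, h⟩
        have heq : z₁ + z₂ = (t : ℂ) * (z₂ - z₁) := by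
          field_simp at h
          linear_combination -h
        have heq2 : (1 + (t:ℂ)) * z₁ = ((t:ℂ) - 1) * z₂ := by linear_combination heq
        have him := congrArg Complex.im heq2
        simp [Complex.mul_im, Complex.add_im, Complex.sub_im, Complex.ofReal_im,
          Complex.ofReal_re] at him
        have hL : 0 ≤ (1 + t) * z₁.im := mul_nonneg (by linarith [ht.1]) (le_of_lt h1)
        have hR : (t - 1) * z₂.im ≤ 0 :=
          mul_nonpos_of_nonpos_of_nonneg (by linarith [ht.2]) (le_of_lt h2)
        have hz : (1 + t) * z₁.im = 0 := le_antisymm (by linarith) hL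
        have ht1 : t = -1 := by
          rcases mul_eq_zero.1 hz with h' | h'
          · linarith
          · linarith
        rw [ht1] at him
        have : z₂.im = 0 := by
          have := him
          nlinarith
        linarith
      rw [hf z₁ z₂ h1 h2 hzz]
      set m := max (‖z₁‖) (‖z₂‖) with hm
      have hm1 : ‖z₁‖ ≤ m := le_max_left _ _
      have hm2 : ‖z₂‖ ≤ m := le_max_right _ _
      have hm0 : 0 ≤ m := le_trans (norm_nonneg _) hm1
      have hAle : ‖A‖ ≤ μ₀ + |μ₁| := by
        rw [hAdef]
        have := norm_sub_le ((μ₀:ℂ)) ((μ₁:ℂ))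
        simp only [Complex.norm_real, Real.norm_eq_abs] at this
        rw [_root_.abs_of_nonneg hμ₀nn] at this
        exact this
      have hBle : ‖B'‖ ≤ μ₀ + |μ₁| := by
        rw [hBdef]
        have := norm_add_le ((μ₀:ℂ)) ((μ₁:ℂ))
        simp only [Complex.norm_real, Real.norm_eq_abs] at this
        rw [_root_.abs_of_nonneg hμ₀nn] at this
        exact this
      have hgle : ‖g ((z₁ + z₂) / (z₂ - z₁))‖ ≤ Bd := hBd _ hζ
      have hsuble : ‖z₂ - z₁‖ ≤ 2 * m := by
        have := norm_sub_le z₂ z₁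
        linarith
      calc ‖A * z₁ + B' * z₂ + (z₂ - z₁) * g ((z₁ + z₂) / (z₂ - z₁))‖
          ≤ ‖A * z₁‖ + ‖B' * z₂‖
            + ‖(z₂ - z₁) * g ((z₁ + z₂) / (z₂ - z₁))‖ := by
            have t1 := norm_add_le (A * z₁ + B' * z₂) ((z₂ - z₁) * g ((z₁ + z₂) / (z₂ - z₁)))
            have t2 := norm_add_le (A * z₁) (B' * z₂)
            linarith
        _ ≤ (μ₀ + |μ₁|) * m + (μ₀ + |μ₁|) * m + (2 * m) * Bd := by
            rw [norm_mul, norm_mul, norm_mul]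
            have n1 := norm_nonneg A
            have n2 := norm_nonneg B'
            have n3 := norm_nonneg (z₂ - z₁)
            have n4 := norm_nonneg (g ((z₁ + z₂) / (z₂ - z₁)))
            have n5 := norm_nonneg z₁
            have n6 := norm_nonneg z₂
            have e1 : ‖A‖ * ‖z₁‖ ≤ (μ₀ + |μ₁|) * m := by nlinarith
            have e2 : ‖B'‖ * ‖z₂‖ ≤ (μ₀ + |μ₁|) * m := by nlinarith
            have e3 : ‖z₂ - z₁‖ * ‖g ((z₁ + z₂) / (z₂ - z₁))‖
                ≤ (2 * m) * Bd := by nlinarith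
            linarith
        _ ≤ (2 * μ₀ + 2 * |μ₁| + 2 * Bd + 1) * m := by nlinarith [abs_nonneg μ₁]
end
end

section
/- Let μ be a finite positive Borel measure on [−1,1], and let f(z₁,z₂) = (μ₀−μ₁)z₁ + (μ₀+μ₁)z₂ + (z₂−z₁)·g((z₁+z₂)/(z₂−z₁)) on Π², where μ₀, μ₁ are the zeroth and first moments of μ and g(ζ) = ∫(1−t²)/(t−ζ)dμ(t). If there exists γ ≥ 0 such that Im f(z₁,z₂) ≤ γ·max(Im z₁, Im z₂) for all (z₁,z₂) ∈ Π², then (1−t²)dμ(t) is the zero measure (so g ≡ 0) and f is linear: f(z₁,z₂) = (μ₀−μ₁)z₁ + (μ₀+μ₁)z₂. -/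
open Complex Set MeasureTheory

noncomputable section

/-- if the homogeneous Pick function
`f(z₁,z₂) = (μ₀-μ₁)z₁ + (μ₀+μ₁)z₂ + (z₂-z₁)g((z₁+z₂)/(z₂-z₁))` satisfies
`Im f(z) ≤ γ·max(Im z₁, Im z₂)` on Π² for some `γ ≥ 0`, then `(1-t²)dμ(t)` is the zero
measure, `g ≡ 0`, and `f` is linear. -/
theorem stmt8 (μ : Measure ℝ) [IsFiniteMeasure μ]
    (hsupp : μ (Set.Icc (-1 : ℝ) 1)ᶜ = 0)
    (g : ℂ → ℂ)
    (hg : ∀ ζ : ℂ, ζ ∉ ((fun t : ℝ => (t : ℂ)) '' Set.Icc (-1 : ℝ) 1) →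
      g ζ = ∫ t : ℝ, (1 - (t : ℂ) ^ 2) / ((t : ℂ) - ζ) ∂μ)
    (f : ℂ → ℂ → ℂ)
    (hf : ∀ z₁ z₂ : ℂ, 0 < z₁.im → 0 < z₂.im → z₁ ≠ z₂ →
      f z₁ z₂ = (((μ Set.univ).toReal : ℂ) - ((∫ t : ℝ, t ∂μ : ℝ) : ℂ)) * z₁
        + (((μ Set.univ).toReal : ℂ) + ((∫ t : ℝ, t ∂μ : ℝ) : ℂ)) * z₂
        + (z₂ - z₁) * g ((z₁ + z₂) / (z₂ - z₁)))
    (hfdiag : ∀ z : ℂ, 0 < z.im →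
      f z z = 2 * ((μ Set.univ).toReal : ℂ) * z)
    (γ : ℝ) (hγ : 0 ≤ γ)
    (hbound : ∀ z₁ z₂ : ℂ, 0 < z₁.im → 0 < z₂.im →
      (f z₁ z₂).im ≤ γ * max z₁.im z₂.im) :
    μ.withDensity (fun t : ℝ => ENNReal.ofReal (1 - t ^ 2)) = 0 ∧
    (∀ ζ : ℂ, ζ ∉ ((fun t : ℝ => (t : ℂ)) '' Set.Icc (-1 : ℝ) 1) → g ζ = 0) ∧
    (∀ z₁ z₂ : ℂ, 0 < z₁.im → 0 < z₂.im →
      f z₁ z₂ = (((μ Set.univ).toReal : ℂ) - ((∫ t : ℝ, t ∂μ : ℝ) : ℂ)) * z₁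
        + (((μ Set.univ).toReal : ℂ) + ((∫ t : ℝ, t ∂μ : ℝ) : ℂ)) * z₂) := by
  have hμ₀nn : 0 ≤ (μ Set.univ).toReal := ENNReal.toReal_nonneg
  -- a.e. support
  have hae : ∀ᵐ t ∂μ, t ∈ Set.Icc (-1:ℝ) 1 := by
    rw [ae_iff]
    convert hsupp using 2
    rfl
  -- points with nonzero imaginary part are outside the image of [-1,1]
  have hnotmem : ∀ ζ : ℂ, ζ.im ≠ 0 →
      ζ ∉ ((fun t : ℝ => (t : ℂ)) '' Set.Icc (-1 : ℝ) 1) := by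
    rintro ζ h ⟨t, _, rfl⟩
    simp at h
  -- integrability of the complex kernel
  have hint : ∀ ζ : ℂ, ζ.im ≠ 0 →
      Integrable (fun t : ℝ => (1 - (t:ℂ)^2)/((t:ℂ) - ζ)) μ := by
    intro ζ hζ
    have hden : ∀ t : ℝ, (t:ℂ) - ζ ≠ 0 := by
      intro t h
      have := congrArg Complex.im h
      simp at this
      exact hζ this
    have hcont : Continuous (fun t : ℝ => (1 - (t:ℂ)^2)/((t:ℂ) - ζ)) :=
      (continuous_const.sub (Complex.continuous_ofReal.pow 2)).div
        (Complex.continuous_ofReal.sub continuous_const) hden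
    refine Integrable.mono' (integrable_const (1/|ζ.im|)) hcont.aestronglyMeasurable ?_
    filter_upwards [hae] with t ht
    rw [norm_div]
    have hnum : ‖(1 : ℂ) - (t:ℂ)^2‖ ≤ 1 := by
      rw [show (1:ℂ) - (t:ℂ)^2 = ((1 - t^2 : ℝ) : ℂ) by push_cast; ring, Complex.norm_real,
        Real.norm_eq_abs, abs_le]
      constructor <;> nlinarith [ht.1, ht.2]
    have hden' : |ζ.im| ≤ ‖(t:ℂ) - ζ‖ := by
      have h1 := Complex.abs_im_le_norm ((t:ℂ) - ζ)
      rw [Complex.sub_im, Complex.ofReal_im] at h1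
      calc |ζ.im| = |0 - ζ.im| := by rw [zero_sub, abs_neg]
        _ ≤ ‖(t:ℂ) - ζ‖ := h1
    exact div_le_div₀ (by norm_num) hnum (abs_pos.2 hζ) hden'
  -- pointwise imaginary part of the kernel
  have him : ∀ x y t : ℝ,
      ((1 - (t:ℂ)^2)/((t:ℂ) - ((x:ℂ) + (y:ℂ)*Complex.I))).im
        = (1 - t^2) * (y/((t-x)^2+y^2)) := by
    intro x y t
    rw [Complex.div_im]
    simp [Complex.normSq_apply, ← Complex.ofReal_pow]
    ring
  -- integrability of the real kernel
  have hintR : ∀ x y : ℝ, 0 < y →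
      Integrable (fun t : ℝ => (1 - t^2) * (y/((t-x)^2+y^2))) μ := by
    intro x y hy
    have h1 := (hint ((x:ℂ) + (y:ℂ)*Complex.I) (by simp [hy.ne'])).im
    refine h1.congr (Filter.Eventually.of_forall fun t => him x y t)
  -- key Pick bound
  have key : ∀ x y : ℝ, 0 < y →
      ∫ t : ℝ, (1 - t^2) * (y / ((t - x)^2 + y^2)) ∂μ ≤ γ/2 * y := by
    intro x y hy
    set ζ : ℂ := (x:ℂ) + (y:ℂ)*Complex.I with hζdef
    have hζim : ζ.im = y := by simp [hζdef]
    have h1 : (ζ - 1).im = y := by simp [hζdef]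
    have h2 : (ζ + 1).im = y := by simp [hζdef]
    have hne : ζ - 1 ≠ ζ + 1 := by
      intro h
      have := congrArg Complex.re h
      simp [hζdef] at this
      linarith
    have harg : ((ζ - 1) + (ζ + 1)) / ((ζ + 1) - (ζ - 1)) = ζ := by
      rw [show ((ζ + 1) - (ζ - 1)) = 2 by ring, show (ζ-1)+(ζ+1) = ζ*2 by ring,
        mul_div_cancel_right₀ _ (two_ne_zero)]
    have hfval := hf (ζ - 1) (ζ + 1) (by rw [h1]; exact hy) (by rw [h2]; exact hy) hne
    rw [harg] at hfval
    have hb := hbound (ζ - 1) (ζ + 1) (by rw [h1]; exact hy) (by rw [h2]; exact hy)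
    rw [hfval, h1, h2, max_self] at hb
    have himf : ((((μ Set.univ).toReal : ℂ) - ((∫ t : ℝ, t ∂μ : ℝ) : ℂ)) * (ζ - 1)
        + (((μ Set.univ).toReal : ℂ) + ((∫ t : ℝ, t ∂μ : ℝ) : ℂ)) * (ζ + 1)
        + ((ζ+1)-(ζ-1)) * g ζ).im
        = 2*(μ Set.univ).toReal*y + 2*(g ζ).im := by
      rw [hζdef]
      simp [Complex.add_im, Complex.sub_im, Complex.mul_im, Complex.mul_re]
      ring
    rw [himf] at hb
    have hgim : (g ζ).im = ∫ t : ℝ, (1 - t^2) * (y / ((t - x)^2 + y^2)) ∂μ := by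
      rw [hg ζ (hnotmem ζ (by rw [hζim]; exact hy.ne'))]
      have h' := integral_im (𝕜 := ℂ) (hint ζ (by rw [hζim]; exact hy.ne'))
      simp only [RCLike.im_to_complex] at h'
      rw [← h']
      exact integral_congr_ae (Filter.Eventually.of_forall fun t => him x y t)
    rw [hgim] at hb
    nlinarith [mul_nonneg hμ₀nn hy.le]
  -- a.e. nonnegativity of the real kernel
  have hnn : ∀ x y : ℝ, 0 < y →
      0 ≤ᵐ[μ] fun t : ℝ => (1 - t^2) * (y/((t-x)^2+y^2)) := by
    intro x y hy
    filter_upwards [hae] with t ht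
    have h1 : (0:ℝ) ≤ 1 - t^2 := by nlinarith [ht.1, ht.2]
    positivity
  -- lintegral bound per x
  have hlint : ∀ x y : ℝ, 0 < y →
      ∫⁻ t : ℝ, ENNReal.ofReal ((1 - t^2) * (y/((t-x)^2+y^2))) ∂μ
        ≤ ENNReal.ofReal (γ/2*y) := by
    intro x y hy
    rw [← ofReal_integral_eq_lintegral_ofReal (hintR x y hy) (hnn x y hy)]
    exact ENNReal.ofReal_le_ofReal (key x y hy)
  -- Tonelli
  have hswap : ∀ y : ℝ, 0 < y →
      ∫⁻ t : ℝ, (∫⁻ x in Set.Icc (-2:ℝ) 2,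
          ENNReal.ofReal ((1 - t^2) * (y/((t-x)^2+y^2)))) ∂μ
        ≤ ENNReal.ofReal (γ/2*y) * ENNReal.ofReal 4 := by
    intro y hy
    have hmeas : AEMeasurable (Function.uncurry fun (x t : ℝ) =>
        ENNReal.ofReal ((1 - t^2) * (y/((t-x)^2+y^2))))
        ((volume.restrict (Set.Icc (-2:ℝ) 2)).prod μ) := by
      apply Measurable.aemeasurable
      apply Measurable.ennreal_ofReal
      have hc : Continuous fun p : ℝ × ℝ => (1 - p.2^2) * (y/((p.2-p.1)^2+y^2)) := by
        apply Continuous.mul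
        · exact continuous_const.sub (continuous_snd.pow 2)
        · exact continuous_const.div
            (((continuous_snd.sub continuous_fst).pow 2).add continuous_const)
            (fun p => by positivity)
      exact hc.measurable
    rw [← lintegral_lintegral_swap hmeas]
    calc ∫⁻ x in Set.Icc (-2:ℝ) 2,
          (∫⁻ t : ℝ, ENNReal.ofReal ((1 - t^2) * (y/((t-x)^2+y^2))) ∂μ)
        ≤ ∫⁻ _x in Set.Icc (-2:ℝ) 2, ENNReal.ofReal (γ/2*y) :=
          lintegral_mono fun x => hlint x y hy
      _ = ENNReal.ofReal (γ/2*y) * ENNReal.ofReal 4 := by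
          rw [setLIntegral_const, Real.volume_Icc]
          norm_num
  -- pointwise lower bound of the inner integral
  have hlow : ∀ y : ℝ, 0 < y → y ≤ 1 → ∀ t : ℝ, t ∈ Set.Icc (-1:ℝ) 1 →
      ENNReal.ofReal ((1 - t^2)/2)
        ≤ ∫⁻ x in Set.Icc (-2:ℝ) 2, ENNReal.ofReal ((1 - t^2) * (y/((t-x)^2+y^2))) := by
    intro y hy hy1 t ht
    have h1t : (0:ℝ) ≤ 1 - t^2 := by nlinarith [ht.1, ht.2]
    have hsub : Set.Icc t (t+y) ⊆ Set.Icc (-2:ℝ) 2 := fun x hx =>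
      ⟨by linarith [ht.1, hx.1], by linarith [ht.2, hx.2]⟩
    have hkermeas : Measurable fun x : ℝ => ENNReal.ofReal ((1 - t^2) * (y/((t-x)^2+y^2))) := by
      apply Measurable.ennreal_ofReal
      have hc : Continuous fun x : ℝ => (1 - t^2) * (y/((t-x)^2+y^2)) := by
        apply Continuous.mul continuous_const
        exact continuous_const.div
          (((continuous_const.sub continuous_id).pow 2).add continuous_const)
          (fun x => by positivity)
      exact hc.measurable
    calc ENNReal.ofReal ((1 - t^2)/2)
        = ENNReal.ofReal ((1-t^2)/(2*y)) * volume (Set.Icc t (t+y)) := by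
          rw [Real.volume_Icc, show t + y - t = y by ring,
            ← ENNReal.ofReal_mul (by positivity)]
          congr 1
          field_simp
      _ = ∫⁻ _x in Set.Icc t (t+y), ENNReal.ofReal ((1-t^2)/(2*y)) :=
          (setLIntegral_const _ _).symm
      _ ≤ ∫⁻ x in Set.Icc t (t+y), ENNReal.ofReal ((1 - t^2) * (y/((t-x)^2+y^2))) := by
          refine setLIntegral_mono hkermeas ?_
          intro x hx
          apply ENNReal.ofReal_le_ofReal
          have hsq : (t-x)^2 ≤ y^2 := by nlinarith [hx.1, hx.2]
          have hpos : (0:ℝ) < (t-x)^2 + y^2 := by positivity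
          have hfrac : 1/(2*y) ≤ y/((t-x)^2+y^2) := by
            rw [div_le_div_iff₀ (by positivity) hpos]
            nlinarith
          calc (1-t^2)/(2*y) = (1-t^2) * (1/(2*y)) := by ring
            _ ≤ (1-t^2) * (y/((t-x)^2+y^2)) := mul_le_mul_of_nonneg_left hfrac h1t
      _ ≤ ∫⁻ x in Set.Icc (-2:ℝ) 2, ENNReal.ofReal ((1 - t^2) * (y/((t-x)^2+y^2))) :=
          lintegral_mono' (Measure.restrict_mono hsub le_rfl) le_rfl
  -- conclude the lintegral vanishes
  have hL : ∀ y : ℝ, 0 < y → y ≤ 1 →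
      ∫⁻ t : ℝ, ENNReal.ofReal ((1 - t^2)/2) ∂μ ≤ ENNReal.ofReal (2*γ*y) := by
    intro y hy hy1
    calc ∫⁻ t : ℝ, ENNReal.ofReal ((1 - t^2)/2) ∂μ
        ≤ ∫⁻ t : ℝ, (∫⁻ x in Set.Icc (-2:ℝ) 2,
            ENNReal.ofReal ((1 - t^2) * (y/((t-x)^2+y^2)))) ∂μ := by
          refine lintegral_mono_ae ?_
          filter_upwards [hae] with t ht
          exact hlow y hy hy1 t ht
      _ ≤ ENNReal.ofReal (γ/2*y) * ENNReal.ofReal 4 := hswap y hy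
      _ = ENNReal.ofReal (2*γ*y) := by
          rw [← ENNReal.ofReal_mul (by positivity)]
          ring_nf
  have hL0 : ∫⁻ t : ℝ, ENNReal.ofReal ((1 - t^2)/2) ∂μ = 0 := by
    refine le_antisymm ?_ (zero_le)
    refine ENNReal.le_of_forall_pos_le_add fun ε hε _ => ?_
    rw [zero_add]
    set y : ℝ := min 1 ((ε:ℝ)/(2*γ+1)) with hydef
    have hεpos : (0:ℝ) < ε := hε
    have hy : 0 < y := lt_min one_pos (by positivity)
    refine (hL y hy (min_le_left _ _)).trans ?_
    rw [← ENNReal.ofReal_coe_nnreal]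
    apply ENNReal.ofReal_le_ofReal
    have hyle : y ≤ (ε:ℝ)/(2*γ+1) := min_le_right _ _
    have h1 : 2*γ*y ≤ 2*γ*((ε:ℝ)/(2*γ+1)) := mul_le_mul_of_nonneg_left hyle (by positivity)
    have h2 : 2*γ*((ε:ℝ)/(2*γ+1)) ≤ ε := by
      rw [mul_div_assoc', div_le_iff₀ (by positivity)]
      nlinarith
    linarith
  -- a.e. 1 - t² = 0
  have haez : ∀ᵐ t ∂μ, (1:ℝ) - t^2 = 0 := by
    have hmeas : Measurable fun t : ℝ => ENNReal.ofReal ((1-t^2)/2) := by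
      apply Measurable.ennreal_ofReal
      exact ((continuous_const.sub (continuous_id.pow 2)).div_const 2).measurable
    have h0 := (lintegral_eq_zero_iff hmeas).1 hL0
    filter_upwards [h0, hae] with t h ht
    have h' : (1-t^2)/2 ≤ 0 := by
      have : ENNReal.ofReal ((1-t^2)/2) = 0 := h
      rwa [ENNReal.ofReal_eq_zero] at this
    nlinarith [ht.1, ht.2]
  -- g vanishes
  have hgz : ∀ ζ : ℂ, ζ ∉ ((fun t : ℝ => (t : ℂ)) '' Set.Icc (-1 : ℝ) 1) → g ζ = 0 := by
    intro ζ hζ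
    rw [hg ζ hζ]
    have hz : (fun t : ℝ => (1 - (t:ℂ)^2)/((t:ℂ) - ζ)) =ᵐ[μ] 0 := by
      filter_upwards [haez] with t h
      have hc : (1:ℂ) - (t:ℂ)^2 = 0 := by
        have := congrArg (fun r : ℝ => (r:ℂ)) h
        push_cast at this
        simpa using this
      simp [hc]
    rw [integral_congr_ae hz]
    simp
  refine ⟨?_, hgz, ?_⟩
  · have hdz : (fun t : ℝ => ENNReal.ofReal (1 - t^2)) =ᵐ[μ] 0 := by
      filter_upwards [haez] with t h
      simp [h]
    rw [withDensity_congr_ae hdz, withDensity_zero]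
  · intro z₁ z₂ h1 h2
    by_cases hz : z₁ = z₂
    · subst hz
      rw [hfdiag z₁ h1]
      ring
    · have hζnot : ((z₁ + z₂)/(z₂ - z₁)) ∉ ((fun t : ℝ => (t : ℂ)) '' Set.Icc (-1 : ℝ) 1) := by
        rintro ⟨t, ht, hte⟩
        have hsub : z₂ - z₁ ≠ 0 := sub_ne_zero.2 (Ne.symm hz)
        have heq : z₁ + z₂ = (t:ℂ) * (z₂ - z₁) := by
          rw [eq_comm, div_eq_iff hsub] at hte
          exact hte
        have him' := congrArg Complex.im heq
        simp [Complex.add_im, Complex.mul_im, Complex.sub_im] at him'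
        rcases lt_or_ge t 1 with hlt | hge
        · have hp1 : 0 < (1-t)*z₂.im := mul_pos (by linarith) h2
          have hp2 : 0 ≤ (1+t)*z₁.im := mul_nonneg (by linarith [ht.1]) h1.le
          nlinarith
        · have ht1 : t = 1 := le_antisymm ht.2 hge
          rw [ht1] at him'
          nlinarith
      rw [hf z₁ z₂ h1 h2 hz, hgz _ hζnot, mul_zero, add_zero]
end
end

section
/- Let g : Π → closure(Π) be holomorphic with Im g bounded on Π, and suppose 2·Im g(ζ) ≤ γ·Im ζ for all ζ ∈ Π and some γ ≥ 0. If Im g is the Poisson integral of a finite positive measure ν supported on [−1,1] (i.e., Im g(x+iy) = ∫ y/((x−t)²+y²) dν(t)), then ν = 0 and Im g ≡ 0 on Π. -/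
set_option maxHeartbeats 800000


open Complex Set MeasureTheory

noncomputable section

/-- if `g : Π → closure(Π)` is holomorphic with `Im g` bounded,
`2·Im g(ζ) ≤ γ·Im ζ` on Π, and `Im g` is the Poisson integral of a finite positive
measure `ν` on `[-1,1]`, then `ν = 0` and `Im g ≡ 0` on Π. -/
theorem stmt9 (g : ℂ → ℂ)
    (hg_hol : DifferentiableOn ℂ g UHP)
    (hg_pick : ∀ ζ ∈ UHP, 0 ≤ (g ζ).im)
    (hbdd : ∃ B : ℝ, ∀ ζ ∈ UHP, (g ζ).im ≤ B)
    (γ : ℝ) (hγ : 0 ≤ γ)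
    (hlin : ∀ ζ ∈ UHP, 2 * (g ζ).im ≤ γ * ζ.im)
    (ν : Measure ℝ) [IsFiniteMeasure ν]
    (hsupp : ν (Set.Icc (-1 : ℝ) 1)ᶜ = 0)
    (hpoisson : ∀ x y : ℝ, 0 < y →
      (g ((x : ℂ) + (y : ℂ) * Complex.I)).im
        = ∫ t : ℝ, y / ((x - t) ^ 2 + y ^ 2) ∂ν) :
    ν = 0 ∧ ∀ ζ ∈ UHP, (g ζ).im = 0 := by
  -- imaginary part of x + y*I is y
  have him : ∀ x y : ℝ, ((x : ℂ) + (y : ℂ) * Complex.I).im = y := by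
    intro x y; simp
  -- key real bound
  have key : ∀ x y : ℝ, 0 < y →
      (∫ t : ℝ, y / ((x - t) ^ 2 + y ^ 2) ∂ν) ≤ γ * y / 2 := by
    intro x y hy
    have hmem : ((x : ℂ) + (y : ℂ) * Complex.I) ∈ UHP := by
      simp [UHP, hy]
    have h1 := hlin _ hmem
    rw [him, hpoisson x y hy] at h1
    linarith
  have hdpos : ∀ x y t : ℝ, 0 < y → (0:ℝ) < (x - t) ^ 2 + y ^ 2 := by
    intro x y t hy; positivity
  -- lintegral version of key
  have keyL : ∀ x y : ℝ, 0 < y →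
      (∫⁻ t : ℝ, ENNReal.ofReal (y / ((x - t) ^ 2 + y ^ 2)) ∂ν)
        ≤ ENNReal.ofReal (γ * y / 2) := by
    intro x y hy
    have hcont : Continuous (fun t : ℝ => y / ((x - t) ^ 2 + y ^ 2)) := by
      apply continuous_const.div (by continuity)
      intro t; exact (hdpos x y t hy).ne'
    have hint : Integrable (fun t : ℝ => y / ((x - t) ^ 2 + y ^ 2)) ν := by
      refine (integrable_const (y / y ^ 2)).mono' hcont.aestronglyMeasurable ?_
      filter_upwards with t
      rw [Real.norm_eq_abs, _root_.abs_of_nonneg (by positivity)]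
      exact div_le_div_of_nonneg_left hy.le (by positivity) (by nlinarith)
    rw [← MeasureTheory.ofReal_integral_eq_lintegral_ofReal hint
      (Filter.Eventually.of_forall fun t => by positivity)]
    exact ENNReal.ofReal_le_ofReal (key x y hy)
  -- ν of [-1,1] is small
  have hIcc : ∀ y : ℝ, 0 < y → y ≤ 1 →
      ν (Set.Icc (-1 : ℝ) 1) ≤ ENNReal.ofReal (2 * γ * y) := by
    intro y hy hy1
    set F : ℝ → ℝ → ENNReal := fun t x => ENNReal.ofReal (y / ((x - t) ^ 2 + y ^ 2)) with hF
    have hFmeas : Measurable (Function.uncurry F) := by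
      apply Continuous.measurable
      apply ENNReal.continuous_ofReal.comp
      apply continuous_const.div (by continuity)
      rintro ⟨t, x⟩; exact (hdpos x y t hy).ne'
    -- inner lower bound
    have hinner : ∀ t ∈ Set.Icc (-1 : ℝ) 1,
        (1 : ENNReal) ≤ ∫⁻ x in Set.Icc (-2 : ℝ) 2, F t x := by
      intro t ht
      have hsub : Set.Icc (t - y) (t + y) ⊆ Set.Icc (-2 : ℝ) 2 := by
        intro x hx
        constructor
        · nlinarith [hx.1, ht.1]
        · nlinarith [hx.2, ht.2]
      have h1 : ∫⁻ x in Set.Icc (t - y) (t + y), ENNReal.ofReal (1 / (2 * y))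
          ≤ ∫⁻ x in Set.Icc (t - y) (t + y), F t x := by
        apply setLIntegral_mono (hFmeas.comp measurable_prodMk_left)
        intro x hx
        apply ENNReal.ofReal_le_ofReal
        have hle : (x - t) ^ 2 + y ^ 2 ≤ 2 * y ^ 2 := by
          have h1 : -y ≤ x - t := by linarith [hx.1]
          have h2 : x - t ≤ y := by linarith [hx.2]
          nlinarith
        calc (1 : ℝ) / (2 * y) = y / (2 * y ^ 2) := by
              field_simp
          _ ≤ y / ((x - t) ^ 2 + y ^ 2) :=
              div_le_div_of_nonneg_left hy.le (hdpos x y t hy) hle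
      have h2 : ∫⁻ x in Set.Icc (t - y) (t + y), ENNReal.ofReal (1 / (2 * y))
          = 1 := by
        rw [setLIntegral_const, Real.volume_Icc]
        rw [← ENNReal.ofReal_mul (by positivity)]
        rw [show t + y - (t - y) = 2 * y by ring]
        rw [show 1 / (2 * y) * (2 * y) = 1 by field_simp]
        simp
      calc (1 : ENNReal) = ∫⁻ x in Set.Icc (t - y) (t + y),
            ENNReal.ofReal (1 / (2 * y)) := h2.symm
        _ ≤ ∫⁻ x in Set.Icc (t - y) (t + y), F t x := h1
        _ ≤ ∫⁻ x in Set.Icc (-2 : ℝ) 2, F t x := lintegral_mono_set hsub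
    -- Tonelli
    have hswap : ∫⁻ t : ℝ, (∫⁻ x in Set.Icc (-2 : ℝ) 2, F t x) ∂ν
        = ∫⁻ x in Set.Icc (-2 : ℝ) 2, (∫⁻ t : ℝ, F t x ∂ν) := by
      exact (lintegral_lintegral_swap (μ := ν)
        (ν := volume.restrict (Set.Icc (-2 : ℝ) 2)) hFmeas.aemeasurable)
    have hlhs : ν (Set.Icc (-1 : ℝ) 1)
        ≤ ∫⁻ t : ℝ, (∫⁻ x in Set.Icc (-2 : ℝ) 2, F t x) ∂ν := by
      have hImeas : Measurable (fun t : ℝ => ∫⁻ x in Set.Icc (-2 : ℝ) 2, F t x) :=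
        hFmeas.lintegral_prod_right'
      calc ν (Set.Icc (-1 : ℝ) 1)
          = ∫⁻ _ in Set.Icc (-1 : ℝ) 1, (1 : ENNReal) ∂ν := by
            rw [setLIntegral_const, one_mul]
        _ ≤ ∫⁻ t in Set.Icc (-1 : ℝ) 1, (∫⁻ x in Set.Icc (-2 : ℝ) 2, F t x) ∂ν :=
            setLIntegral_mono hImeas hinner
        _ ≤ ∫⁻ t : ℝ, (∫⁻ x in Set.Icc (-2 : ℝ) 2, F t x) ∂ν :=
            setLIntegral_le_lintegral _ _
    have hrhs : ∫⁻ x in Set.Icc (-2 : ℝ) 2, (∫⁻ t : ℝ, F t x ∂ν)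
        ≤ ENNReal.ofReal (2 * γ * y) := by
      calc ∫⁻ x in Set.Icc (-2 : ℝ) 2, (∫⁻ t : ℝ, F t x ∂ν)
          ≤ ∫⁻ _ in Set.Icc (-2 : ℝ) 2, ENNReal.ofReal (γ * y / 2) :=
            setLIntegral_mono measurable_const fun x _ => keyL x y hy
        _ = ENNReal.ofReal (γ * y / 2) * volume (Set.Icc (-2 : ℝ) 2) := by
            rw [setLIntegral_const]
        _ = ENNReal.ofReal (2 * γ * y) := by
            rw [Real.volume_Icc, show (2 : ℝ) - (-2) = 4 by norm_num,
              ← ENNReal.ofReal_mul (by positivity)]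
            norm_num; ring_nf
      -- done
    calc ν (Set.Icc (-1 : ℝ) 1)
        ≤ ∫⁻ t : ℝ, (∫⁻ x in Set.Icc (-2 : ℝ) 2, F t x) ∂ν := hlhs
      _ = ∫⁻ x in Set.Icc (-2 : ℝ) 2, (∫⁻ t : ℝ, F t x ∂ν) := hswap
      _ ≤ ENNReal.ofReal (2 * γ * y) := hrhs
  -- ν [-1,1] = 0
  have hν0 : ν (Set.Icc (-1 : ℝ) 1) = 0 := by
    have htend : Filter.Tendsto (fun y : ℝ => ENNReal.ofReal (2 * γ * y))
        (nhdsWithin 0 (Set.Ioi 0)) (nhds 0) := by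
      have : Filter.Tendsto (fun y : ℝ => 2 * γ * y) (nhdsWithin 0 (Set.Ioi 0))
          (nhds 0) := by
        have h : Continuous (fun y : ℝ => 2 * γ * y) := by continuity
        simpa using (h.tendsto 0).mono_left nhdsWithin_le_nhds
      simpa [Function.comp_def] using (ENNReal.continuous_ofReal.tendsto 0).comp this
    have hev : ∀ᶠ y in nhdsWithin (0:ℝ) (Set.Ioi 0),
        ν (Set.Icc (-1 : ℝ) 1) ≤ ENNReal.ofReal (2 * γ * y) := by
      filter_upwards [Ioc_mem_nhdsGT_of_mem (Set.left_mem_Ico.mpr one_pos)] with y hy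
      exact hIcc y hy.1 hy.2
    simpa using ge_of_tendsto htend hev
  have hν : ν = 0 := by
    have : ν Set.univ = 0 := by
      have := measure_union_le (μ := ν) (Set.Icc (-1 : ℝ) 1) (Set.Icc (-1 : ℝ) 1)ᶜ
      rw [Set.union_compl_self, hν0, hsupp] at this
      simpa using this
    exact Measure.measure_univ_eq_zero.mp this
  refine ⟨hν, fun ζ hζ => ?_⟩
  have h := hpoisson ζ.re ζ.im hζ
  rw [Complex.re_add_im] at h
  rw [h, hν]
  simp
end
end

section
/- Let φ : 𝔻² → closure(𝔻) be holomorphic, τ ∈ 𝕋², and suppose γ = limsup_{z →^{nt} τ} (1−|φ(z)|)/(1−‖z‖) < ∞, where the limsup is over all sequences approaching τ nontangentially. Suppose φ has nontangential limit ω ∈ 𝕋 at τ and the directional derivative Dφ(τ)[h] exists for each direction h with Re(conj(τ_r)·h_r) < 0. Then the function f(z₁,z₂) := −i·conj(ω)·Dφ(τ)[(iτ₁z₁, iτ₂z₂)] satisfies Im f(z₁,z₂) ≤ γ·max(Im z₁, Im z₂) for all (z₁,z₂) ∈ Π². -/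
open Complex Set Filter Topology

noncomputable section

/-- The open bidisk 𝔻². -/
def Bidisk : Set (ℂ × ℂ) := {z : ℂ × ℂ | ‖z.1‖ < 1 ∧ ‖z.2‖ < 1}

/-- The sup norm on ℂ². -/
def supNorm (z : ℂ × ℂ) : ℝ := max (‖z.1‖) (‖z.2‖)

/-- The distance from `z ∈ 𝔻²` to the boundary of the bidisk (in the sup norm). -/
def distBdy (z : ℂ × ℂ) : ℝ := min (1 - ‖z.1‖) (1 - ‖z.2‖)

lemma normSq_one_add (z : ℂ) (t : ℝ) :
    Complex.normSq (1 + (t:ℂ) * (Complex.I * z))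
      = 1 - 2*t*z.im + t^2 * Complex.normSq z := by
  simp [Complex.normSq_apply, Complex.add_re, Complex.add_im, Complex.mul_re, Complex.mul_im]
  ring

lemma ray_abs (z : ℂ) (hz : 0 < z.im) {t : ℝ} (ht : 0 < t)
    (ht2 : t * Complex.normSq z ≤ z.im) :
    ‖1 + (t:ℂ) * (Complex.I * z)‖ < 1 ∧
    t * z.im / 2 ≤ 1 - ‖1 + (t:ℂ) * (Complex.I * z)‖ ∧
    (1 - ‖1 + (t:ℂ) * (Complex.I * z)‖) / t
      = (2*z.im - t * Complex.normSq z)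
        / (1 + ‖1 + (t:ℂ) * (Complex.I * z)‖) := by
  set w := 1 + (t:ℂ) * (Complex.I * z) with hw
  have hsq : (‖w‖)^2 = 1 - 2*t*z.im + t^2 * Complex.normSq z := by
    rw [Complex.sq_norm, hw, normSq_one_add]
  have habs0 : 0 ≤ ‖w‖ := norm_nonneg w
  have hkey : t * (t * Complex.normSq z) ≤ t * z.im := mul_le_mul_of_nonneg_left ht2 ht.le
  have h1 : (‖w‖)^2 < 1 := by nlinarith
  have hlt : ‖w‖ < 1 := by nlinarith
  refine ⟨hlt, by nlinarith, ?_⟩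
  rw [div_eq_div_iff ht.ne' (by positivity)]
  linear_combination -hsq

lemma omega_id (ω c : ℂ) (hω : ‖ω‖ = 1) :
    1 - ((starRingEnd ℂ) ω * c).re
      = (1 - (‖c‖)^2)/2 + (‖ω - c‖)^2/2 := by
  have h1 : ω.re^2 + ω.im^2 = 1 := by
    have h2 := Complex.sq_norm ω
    rw [hω] at h2
    simpa [Complex.normSq_apply, sq] using h2.symm
  simp only [Complex.mul_re, Complex.conj_re, Complex.conj_im, Complex.sq_norm,
    Complex.normSq_apply, Complex.sub_re, Complex.sub_im]
  nlinarith [h1]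

/-- if the nontangential limsup of the Julia quotient at `τ` is at most `γ`,
`φ` has nontangential limit `ω ∈ 𝕋` at `τ` and directional derivatives `Dφ(τ)[h]` for
directions `h` with `Re(conj(τ_r)·h_r) < 0`, then
`f(z₁,z₂) = -i·conj(ω)·Dφ(τ)[(iτ₁z₁, iτ₂z₂)]` satisfies
`Im f(z₁,z₂) ≤ γ·max(Im z₁, Im z₂)` on Π². -/
theorem stmt12 (φ : ℂ × ℂ → ℂ)
    (hφ_hol : DifferentiableOn ℂ φ Bidisk)
    (hφ_map : ∀ z ∈ Bidisk, ‖φ z‖ ≤ 1)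
    (τ : ℂ × ℂ) (hτ : ‖τ.1‖ = 1 ∧ ‖τ.2‖ = 1)
    (γ : ℝ) (hγ : 0 ≤ γ)
    -- nontangential limsup of the Julia quotient is at most γ
    (hlimsup : ∀ z : ℕ → ℂ × ℂ, (∀ n, z n ∈ Bidisk) →
      Tendsto z atTop (nhds τ) →
      (∃ M > (0 : ℝ), ∀ n, supNorm (z n - τ) ≤ M * distBdy (z n)) →
      Filter.limsup (fun n => (1 - ‖φ (z n)‖) / (1 - supNorm (z n))) atTop ≤ γ)
    (ω : ℂ) (hω : ‖ω‖ = 1)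
    -- nontangential limit ω at τ
    (hωlim : ∀ z : ℕ → ℂ × ℂ, (∀ n, z n ∈ Bidisk) →
      Tendsto z atTop (nhds τ) →
      (∃ M > (0 : ℝ), ∀ n, supNorm (z n - τ) ≤ M * distBdy (z n)) →
      Tendsto (fun n => φ (z n)) atTop (nhds ω))
    -- directional derivatives along directions pointing into the bidisk
    (D : ℂ × ℂ → ℂ)
    (hD : ∀ h : ℂ × ℂ,
      (starRingEnd ℂ τ.1 * h.1).re < 0 → (starRingEnd ℂ τ.2 * h.2).re < 0 →
      Tendsto (fun t : ℝ => (φ (τ + (t : ℂ) • h) - ω) / (t : ℂ))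
        (nhdsWithin 0 (Set.Ioi 0)) (nhds (D h))) :
    ∀ z₁ z₂ : ℂ, 0 < z₁.im → 0 < z₂.im →
      (-Complex.I * starRingEnd ℂ ω *
          D (Complex.I * τ.1 * z₁, Complex.I * τ.2 * z₂)).im
        ≤ γ * max z₁.im z₂.im := by
  intro z₁ z₂ hz₁ hz₂
  obtain ⟨hτ1, hτ2⟩ := hτ
  set h : ℂ × ℂ := (Complex.I * τ.1 * z₁, Complex.I * τ.2 * z₂) with hh
  have hz10 : z₁ ≠ 0 := fun h0 => by simp [h0] at hz₁
  have hz20 : z₂ ≠ 0 := fun h0 => by simp [h0] at hz₂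
  have hn1 : 0 < Complex.normSq z₁ := Complex.normSq_pos.2 hz10
  have hn2 : 0 < Complex.normSq z₂ := Complex.normSq_pos.2 hz20
  set ε : ℝ := min (z₁.im / Complex.normSq z₁) (z₂.im / Complex.normSq z₂) with hε
  have hεpos : 0 < ε := lt_min (div_pos hz₁ hn1) (div_pos hz₂ hn2)
  set t : ℕ → ℝ := fun n => ε/2 * (1/(n+1)) with htdef
  have htpos : ∀ n, 0 < t n := fun n => by positivity
  have htle : ∀ n, t n ≤ ε := by
    intro n
    have h1 : (1:ℝ)/(n+1) ≤ 1 := by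
      rw [div_le_one (by positivity)]
      linarith [Nat.cast_nonneg (α := ℝ) n]
    calc t n = ε/2 * (1/(n+1)) := rfl
      _ ≤ ε/2 * 1 := by nlinarith
      _ ≤ ε := by linarith
  have ht2₁ : ∀ n, t n * Complex.normSq z₁ ≤ z₁.im := by
    intro n
    have h1 : t n ≤ z₁.im / Complex.normSq z₁ := le_trans (htle n) (min_le_left _ _)
    calc t n * Complex.normSq z₁ ≤ (z₁.im / Complex.normSq z₁) * Complex.normSq z₁ :=
          mul_le_mul_of_nonneg_right h1 hn1.le
      _ = z₁.im := div_mul_cancel₀ _ hn1.ne'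
  have ht2₂ : ∀ n, t n * Complex.normSq z₂ ≤ z₂.im := by
    intro n
    have h1 : t n ≤ z₂.im / Complex.normSq z₂ := le_trans (htle n) (min_le_right _ _)
    calc t n * Complex.normSq z₂ ≤ (z₂.im / Complex.normSq z₂) * Complex.normSq z₂ :=
          mul_le_mul_of_nonneg_right h1 hn2.le
      _ = z₂.im := div_mul_cancel₀ _ hn2.ne'
  have htlim : Tendsto t atTop (𝓝 (0:ℝ)) := by
    have h2 := tendsto_one_div_add_atTop_nhds_zero_nat.const_mul (ε/2)
    simpa [htdef, one_div, mul_zero] using h2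
  set zs : ℕ → ℂ × ℂ := fun n => τ + (t n : ℂ) • h with hzs
  set w₁ : ℕ → ℂ := fun n => 1 + (t n : ℂ) * (Complex.I * z₁) with hw₁
  set w₂ : ℕ → ℂ := fun n => 1 + (t n : ℂ) * (Complex.I * z₂) with hw₂
  have hzs1 : ∀ n, (zs n).1 = τ.1 * w₁ n := by
    intro n
    simp only [hzs, hw₁, hh, Prod.fst_add, Prod.smul_fst, smul_eq_mul]
    ring
  have hzs2 : ∀ n, (zs n).2 = τ.2 * w₂ n := by
    intro n
    simp only [hzs, hw₂, hh, Prod.snd_add, Prod.smul_snd, smul_eq_mul]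
    ring
  have habs1 : ∀ n, ‖(zs n).1‖ = ‖w₁ n‖ := by
    intro n; rw [hzs1, norm_mul, hτ1, one_mul]
  have habs2 : ∀ n, ‖(zs n).2‖ = ‖w₂ n‖ := by
    intro n; rw [hzs2, norm_mul, hτ2, one_mul]
  have hr1 := fun n => ray_abs z₁ hz₁ (htpos n) (ht2₁ n)
  have hr2 := fun n => ray_abs z₂ hz₂ (htpos n) (ht2₂ n)
  have hbid : ∀ n, zs n ∈ Bidisk := by
    intro n
    exact ⟨by rw [habs1]; exact (hr1 n).1, by rw [habs2]; exact (hr2 n).1⟩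
  have htC : Tendsto (fun n => (t n : ℂ)) atTop (𝓝 0) := by
    have := (Complex.continuous_ofReal.tendsto (0:ℝ)).comp htlim
    simpa [Function.comp_def] using this
  have hzslim : Tendsto zs atTop (𝓝 τ) := by
    have h2 : Tendsto (fun n => τ + (t n:ℂ) • h) atTop (𝓝 (τ + (0:ℂ) • h)) :=
      tendsto_const_nhds.add (htC.smul_const h)
    simpa [hzs] using h2
  have hsup : ∀ n, supNorm (zs n) = max (‖w₁ n‖) (‖w₂ n‖) := by
    intro n; rw [supNorm, habs1, habs2]
  have hdist : ∀ n, distBdy (zs n)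
      = min (1 - ‖w₁ n‖) (1 - ‖w₂ n‖) := by
    intro n; rw [distBdy, habs1, habs2]
  set m : ℝ := min z₁.im z₂.im with hm
  have hmpos : 0 < m := lt_min hz₁ hz₂
  set X : ℝ := max (‖z₁‖) (‖z₂‖) with hX
  have hXpos : 0 < X := lt_max_of_lt_left (norm_pos_iff.2 hz10)
  set M : ℝ := 2 * X / m + 1 with hM
  have hMpos : 0 < M := by positivity
  have hdistlb : ∀ n, t n * m / 2 ≤ distBdy (zs n) := by
    intro n
    rw [hdist]
    refine le_min (le_trans ?_ (hr1 n).2.1) (le_trans ?_ (hr2 n).2.1)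
    · have : m ≤ z₁.im := min_le_left _ _
      have := htpos n
      nlinarith
    · have : m ≤ z₂.im := min_le_right _ _
      have := htpos n
      nlinarith
  have hnt : ∀ n, supNorm (zs n - τ) ≤ M * distBdy (zs n) := by
    intro n
    have hdiff1 : (zs n - τ).1 = (t n : ℂ) * (Complex.I * τ.1 * z₁) := by
      simp only [hzs, hh, Prod.fst_sub, Prod.fst_add, Prod.smul_fst, smul_eq_mul]
      ring
    have hdiff2 : (zs n - τ).2 = (t n : ℂ) * (Complex.I * τ.2 * z₂) := by
      simp only [hzs, hh, Prod.snd_sub, Prod.snd_add, Prod.smul_snd, smul_eq_mul]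
      ring
    have habsd1 : ‖(zs n - τ).1‖ = t n * ‖z₁‖ := by
      rw [hdiff1]
      simp [map_mul, hτ1, Complex.norm_real, Real.norm_eq_abs, abs_of_pos (htpos n)]
    have habsd2 : ‖(zs n - τ).2‖ = t n * ‖z₂‖ := by
      rw [hdiff2]
      simp [map_mul, hτ2, Complex.norm_real, Real.norm_eq_abs, abs_of_pos (htpos n)]
    have hs : supNorm (zs n - τ) ≤ t n * X := by
      rw [supNorm, habsd1, habsd2]
      exact max_le (mul_le_mul_of_nonneg_left (le_max_left _ _) (htpos n).le)
        (mul_le_mul_of_nonneg_left (le_max_right _ _) (htpos n).le)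
    have hkeyM : (2 * X / m) * (t n * m / 2) = t n * X := by
      field_simp
    calc supNorm (zs n - τ) ≤ t n * X := hs
      _ = (2 * X / m) * (t n * m / 2) := hkeyM.symm
      _ ≤ M * (t n * m / 2) := by
          have h0 : 0 ≤ t n * m / 2 := by positivity
          have : 2 * X / m ≤ M := by rw [hM]; linarith
          exact mul_le_mul_of_nonneg_right this h0
      _ ≤ M * distBdy (zs n) := mul_le_mul_of_nonneg_left (hdistlb n) hMpos.le
  have hntpkg : ∃ M' > (0:ℝ), ∀ n, supNorm (zs n - τ) ≤ M' * distBdy (zs n) := ⟨M, hMpos, hnt⟩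
  -- directional derivative conditions
  have hnτ1 : (starRingEnd ℂ) τ.1 * τ.1 = 1 := by
    rw [mul_comm, Complex.mul_conj, Complex.normSq_eq_norm_sq, hτ1]
    norm_num
  have hnτ2 : (starRingEnd ℂ) τ.2 * τ.2 = 1 := by
    rw [mul_comm, Complex.mul_conj, Complex.normSq_eq_norm_sq, hτ2]
    norm_num
  have hc1 : ((starRingEnd ℂ) τ.1 * h.1).re < 0 := by
    have he : (starRingEnd ℂ) τ.1 * h.1 = Complex.I * z₁ := by
      calc (starRingEnd ℂ) τ.1 * h.1 = ((starRingEnd ℂ) τ.1 * τ.1) * (Complex.I * z₁) := by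
            rw [hh]; ring
        _ = Complex.I * z₁ := by rw [hnτ1, one_mul]
    rw [he]
    simp [Complex.mul_re]
    exact hz₁
  have hc2 : ((starRingEnd ℂ) τ.2 * h.2).re < 0 := by
    have he : (starRingEnd ℂ) τ.2 * h.2 = Complex.I * z₂ := by
      calc (starRingEnd ℂ) τ.2 * h.2 = ((starRingEnd ℂ) τ.2 * τ.2) * (Complex.I * z₂) := by
            rw [hh]; ring
        _ = Complex.I * z₂ := by rw [hnτ2, one_mul]
    rw [he]
    simp [Complex.mul_re]
    exact hz₂
  have htpos' : Tendsto t atTop (𝓝[>] (0:ℝ)) :=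
    tendsto_nhdsWithin_of_tendsto_nhds_of_eventually_within _ htlim
      (Eventually.of_forall (fun n => htpos n))
  have hkey : Tendsto (fun n => (φ (zs n) - ω) / (t n : ℂ)) atTop (𝓝 (D h)) := by
    have h2 := (hD h hc1 hc2).comp htpos'
    simpa [Function.comp_def, hzs] using h2
  have hφlim : Tendsto (fun n => φ (zs n)) atTop (𝓝 ω) := hωlim zs hbid hzslim hntpkg
  -- limit of (1 - |w_r|)/t
  have habsw1lim : Tendsto (fun n => ‖w₁ n‖) atTop (𝓝 1) := by
    have hwlim : Tendsto w₁ atTop (𝓝 1) := by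
      have h2 : Tendsto (fun n => 1 + (t n:ℂ) * (Complex.I * z₁)) atTop
          (𝓝 (1 + 0 * (Complex.I * z₁))) := tendsto_const_nhds.add (htC.mul_const _)
      simpa [hw₁] using h2
    have h3 := (continuous_norm.tendsto 1).comp hwlim
    simpa [Function.comp_def] using h3
  have habsw2lim : Tendsto (fun n => ‖w₂ n‖) atTop (𝓝 1) := by
    have hwlim : Tendsto w₂ atTop (𝓝 1) := by
      have h2 : Tendsto (fun n => 1 + (t n:ℂ) * (Complex.I * z₂)) atTop
          (𝓝 (1 + 0 * (Complex.I * z₂))) := tendsto_const_nhds.add (htC.mul_const _)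
      simpa [hw₂] using h2
    have h3 := (continuous_norm.tendsto 1).comp hwlim
    simpa [Function.comp_def] using h3
  have hu1 : Tendsto (fun n => (1 - ‖w₁ n‖)/t n) atTop (𝓝 z₁.im) := by
    have heq : ∀ n, (1 - ‖w₁ n‖)/t n
        = (2*z₁.im - t n * Complex.normSq z₁)/(1 + ‖w₁ n‖) :=
      fun n => (hr1 n).2.2
    have hnum : Tendsto (fun n => 2*z₁.im - t n * Complex.normSq z₁) atTop (𝓝 (2*z₁.im)) := by
      have h2 := tendsto_const_nhds (x := (2*z₁.im : ℝ)) (f := atTop (α := ℕ))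
      have h3 := htlim.mul_const (Complex.normSq z₁)
      rw [zero_mul] at h3
      have h4 := h2.sub h3
      rw [sub_zero] at h4
      exact h4
    have hden : Tendsto (fun n => 1 + ‖w₁ n‖) atTop (𝓝 (2:ℝ)) := by
      have h2 := tendsto_const_nhds (x := (1:ℝ)) (f := atTop (α := ℕ))
      have := h2.add habsw1lim
      norm_num at this
      exact this
    have h4 := hnum.div hden (by norm_num)
    have h5 : (2*z₁.im)/2 = z₁.im := by ring
    rw [h5] at h4
    simp only [heq]
    exact h4
  have hu2 : Tendsto (fun n => (1 - ‖w₂ n‖)/t n) atTop (𝓝 z₂.im) := by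
    have heq : ∀ n, (1 - ‖w₂ n‖)/t n
        = (2*z₂.im - t n * Complex.normSq z₂)/(1 + ‖w₂ n‖) :=
      fun n => (hr2 n).2.2
    have hnum : Tendsto (fun n => 2*z₂.im - t n * Complex.normSq z₂) atTop (𝓝 (2*z₂.im)) := by
      have h2 := tendsto_const_nhds (x := (2*z₂.im : ℝ)) (f := atTop (α := ℕ))
      have h3 := htlim.mul_const (Complex.normSq z₂)
      rw [zero_mul] at h3
      have h4 := h2.sub h3
      rw [sub_zero] at h4
      exact h4
    have hden : Tendsto (fun n => 1 + ‖w₂ n‖) atTop (𝓝 (2:ℝ)) := by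
      have h2 := tendsto_const_nhds (x := (1:ℝ)) (f := atTop (α := ℕ))
      have := h2.add habsw2lim
      norm_num at this
      exact this
    have h4 := hnum.div hden (by norm_num)
    have h5 : (2*z₂.im)/2 = z₂.im := by ring
    rw [h5] at h4
    simp only [heq]
    exact h4
  have hslim : Tendsto (fun n => (1 - supNorm (zs n))/t n) atTop (𝓝 m) := by
    have heq : ∀ n, (1 - supNorm (zs n))/t n
        = min ((1 - ‖w₁ n‖)/t n) ((1 - ‖w₂ n‖)/t n) := by
      intro n
      rw [hsup n]
      rcases le_total (‖w₁ n‖) (‖w₂ n‖) with hab|hab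
      · rw [max_eq_right hab, min_eq_right]
        exact (div_le_div_iff_of_pos_right (htpos n)).2 (by linarith)
      · rw [max_eq_left hab, min_eq_left]
        exact (div_le_div_iff_of_pos_right (htpos n)).2 (by linarith)
    simp only [heq]
    exact hu1.min hu2
  -- positivity of 1 - supNorm
  have hpden : ∀ n, 0 < 1 - supNorm (zs n) := by
    intro n
    rw [sub_pos, hsup n]
    exact max_lt (hr1 n).1 (hr2 n).1
  -- A_n and its limit
  have hωn : (starRingEnd ℂ) ω * ω = 1 := by
    rw [mul_comm, Complex.mul_conj, Complex.normSq_eq_norm_sq, hω]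
    norm_num
  have hAeq : ∀ n, (1 - ((starRingEnd ℂ) ω * φ (zs n)).re)/t n
      = -(((starRingEnd ℂ) ω * ((φ (zs n) - ω)/(t n:ℂ))).re) := by
    intro n
    rw [← mul_div_assoc, Complex.div_ofReal_re, mul_sub, hωn]
    rw [Complex.sub_re, Complex.one_re]
    ring
  have hA : Tendsto (fun n => (1 - ((starRingEnd ℂ) ω * φ (zs n)).re)/t n) atTop
      (𝓝 (-(((starRingEnd ℂ) ω * D h).re))) := by
    simp only [hAeq]
    have h2 := hkey.const_mul ((starRingEnd ℂ) ω)
    have h3 := (Complex.continuous_re.tendsto _).comp h2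
    exact h3.neg
  -- limsup hypothesis
  have hQγ := hlimsup zs hbid hzslim hntpkg
  -- Q ≤ R pointwise
  have hφabs : ∀ n, ((starRingEnd ℂ) ω * φ (zs n)).re ≤ ‖φ (zs n)‖ := by
    intro n
    calc ((starRingEnd ℂ) ω * φ (zs n)).re ≤ ‖(starRingEnd ℂ) ω * φ (zs n)‖ :=
          Complex.re_le_norm _
      _ = ‖φ (zs n)‖ := by
          rw [norm_mul, Complex.norm_conj, hω, one_mul]
  have hQle : ∀ n, (1 - ‖φ (zs n)‖)/(1 - supNorm (zs n))
      ≤ ((1 - ((starRingEnd ℂ) ω * φ (zs n)).re)/t n) / ((1 - supNorm (zs n))/t n) := by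
    intro n
    have he : ((1 - ((starRingEnd ℂ) ω * φ (zs n)).re)/t n) / ((1 - supNorm (zs n))/t n)
        = (1 - ((starRingEnd ℂ) ω * φ (zs n)).re) / (1 - supNorm (zs n)) := by
      rw [div_div_div_cancel_right₀ (htpos n).ne']
    rw [he]
    exact (div_le_div_iff_of_pos_right (hpden n)).2 (by linarith [hφabs n])
  have hbdd : IsBoundedUnder (· ≤ ·) atTop
      (fun n => (1 - ‖φ (zs n)‖)/(1 - supNorm (zs n))) := by
    have hRlim := hA.div hslim hmpos.ne'
    exact hRlim.isBoundedUnder_le.mono_le (Eventually.of_forall hQle)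
  -- main epsilon argument
  have main : ∀ ε' > (0:ℝ), -(((starRingEnd ℂ) ω * D h).re) ≤ (γ + ε') * m := by
    intro ε' hε'
    have hev : ∀ᶠ n in atTop,
        (1 - ‖φ (zs n)‖)/(1 - supNorm (zs n)) < γ + ε' :=
      Filter.eventually_lt_of_limsup_lt (lt_of_le_of_lt hQγ (by linarith)) hbdd
    have hineq : ∀ᶠ n in atTop, (1 - ((starRingEnd ℂ) ω * φ (zs n)).re)/t n
        ≤ (γ+ε') * ((1 - supNorm (zs n))/t n)
          + ‖(φ (zs n) - ω)/(t n:ℂ)‖ * ‖ω - φ (zs n)‖ / 2 := by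
      filter_upwards [hev] with n hn
      have h1 : 1 - ‖φ (zs n)‖ ≤ (γ+ε') * (1 - supNorm (zs n)) := by
        have := (div_lt_iff₀ (hpden n)).1 hn
        linarith
      have h2 := omega_id ω (φ (zs n)) hω
      have h3 : ‖φ (zs n)‖ ≤ 1 := hφ_map _ (hbid n)
      have h4 : 0 ≤ ‖φ (zs n)‖ := norm_nonneg _
      have h5 : (1 - (‖φ (zs n)‖)^2)/2 ≤ 1 - ‖φ (zs n)‖ := by nlinarith
      set Y := ‖(φ (zs n) - ω)/(t n:ℂ)‖ * ‖ω - φ (zs n)‖ / 2 with hY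
      have h6 : (‖ω - φ (zs n)‖)^2/2 = t n * Y := by
        rw [hY, norm_div, Complex.norm_real, Real.norm_eq_abs, abs_of_pos (htpos n),
          norm_sub_rev (φ (zs n)) ω]
        field_simp
        rw [mul_div_cancel_right₀ _ (htpos n).ne']
      have h8 : 1 - ((starRingEnd ℂ) ω * φ (zs n)).re
          ≤ (γ+ε') * (1 - supNorm (zs n)) + t n * Y := by
        rw [h2]
        linarith
      calc (1 - ((starRingEnd ℂ) ω * φ (zs n)).re)/t n
          ≤ ((γ+ε') * (1 - supNorm (zs n)) + t n * Y)/t n :=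
            (div_le_div_iff_of_pos_right (htpos n)).2 h8
        _ = (γ+ε') * ((1 - supNorm (zs n))/t n) + Y := by
            field_simp
            rw [add_div, mul_div_cancel_left₀ Y (htpos n).ne']
    have hY0 : Tendsto (fun n => ‖(φ (zs n) - ω)/(t n:ℂ)‖
        * ‖ω - φ (zs n)‖ / 2) atTop (𝓝 (‖D h‖ * 0 / 2)) := by
      have hx1 : Tendsto (fun n => ‖(φ (zs n) - ω)/(t n:ℂ)‖) atTop
          (𝓝 (‖D h‖)) := by
        have := (continuous_norm.tendsto _).comp hkey
        simpa only [Function.comp_def] using this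
      have hx2 : Tendsto (fun n => ‖ω - φ (zs n)‖) atTop (𝓝 0) := by
        have h2 : Tendsto (fun n => ω - φ (zs n)) atTop (𝓝 (ω - ω)) :=
          tendsto_const_nhds.sub hφlim
        rw [sub_self] at h2
        have := (continuous_norm.tendsto _).comp h2
        simpa [Function.comp_def] using this
      exact (hx1.mul hx2).div_const 2
    rw [mul_zero, zero_div] at hY0
    have hRHS : Tendsto (fun n => (γ+ε') * ((1 - supNorm (zs n))/t n)
        + ‖(φ (zs n) - ω)/(t n:ℂ)‖ * ‖ω - φ (zs n)‖ / 2) atTop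
        (𝓝 ((γ+ε') * m + 0)) := (hslim.const_mul _).add hY0
    rw [add_zero] at hRHS
    exact le_of_tendsto_of_tendsto hA hRHS hineq
  have hfin : -(((starRingEnd ℂ) ω * D h).re) ≤ γ * m := by
    apply le_of_forall_pos_le_add
    intro δ hδ
    have h2 := main (δ/m) (div_pos hδ hmpos)
    have h3 : (γ + δ/m) * m = γ*m + δ := by
      field_simp
    linarith
  have hgoal_eq : (-Complex.I * (starRingEnd ℂ) ω * D h).im
      = -(((starRingEnd ℂ) ω * D h).re) := by
    simp [Complex.mul_im, Complex.mul_re]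
    ring
  calc (-Complex.I * (starRingEnd ℂ) ω * D h).im
      = -(((starRingEnd ℂ) ω * D h).re) := hgoal_eq
    _ ≤ γ * m := hfin
    _ ≤ γ * max z₁.im z₂.im := by
        apply mul_le_mul_of_nonneg_left _ hγ
        exact le_trans (min_le_left _ _) (le_max_left _ _)
end
end

section
/- The function h ↦ −3h₁h₂/(h₁+2h₂), defined for h ∈ ℂ² with Re h₁ < 0 and Re h₂ < 0, is not bounded by any constant multiple of max(|h₁|,|h₂|): for every α > 0 there exists h with Re h₁ < 0, Re h₂ < 0 and |−3h₁h₂/(h₁+2h₂)| > α·max(|h₁|,|h₂|). (E.g., take h = (−ε+2i, −ε−i) with ε ↓ 0.) -/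
open Complex Set

noncomputable section

/-- the directional derivative `h ↦ -3h₁h₂/(h₁+2h₂)` of `φ₃` at `(1,1)`,
defined for directions pointing into the bidisk, is not linearly bounded. -/
theorem stmt14 :
    ∀ α > (0 : ℝ), ∃ h₁ h₂ : ℂ, h₁.re < 0 ∧ h₂.re < 0 ∧
      ‖-3 * h₁ * h₂ / (h₁ + 2 * h₂)‖
        > α * max ‖h₁‖ ‖h₂‖ := by
  intro α hα
  set ε : ℝ := 1 / (α + 1) with hε
  have hεpos : 0 < ε := by positivity
  refine ⟨⟨-ε, 2⟩, ⟨-ε, -1⟩, by simpa using hεpos, by simpa using hεpos, ?_⟩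
  have hden : (⟨-ε, 2⟩ : ℂ) + 2 * ⟨-ε, -1⟩ = ⟨-3 * ε, 0⟩ := by
    apply Complex.ext <;> simp <;> ring
  have habs1 : ‖(⟨-ε, 2⟩ : ℂ)‖ = Real.sqrt (ε ^ 2 + 4) := by
    rw [Complex.norm_def, Complex.normSq_mk]; ring_nf
  have habs2 : ‖(⟨-ε, -1⟩ : ℂ)‖ = Real.sqrt (ε ^ 2 + 1) := by
    rw [Complex.norm_def, Complex.normSq_mk]; ring_nf
  have habsd : ‖(⟨-3 * ε, 0⟩ : ℂ)‖ = 3 * ε := by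
    rw [Complex.norm_def, Complex.normSq_mk]
    rw [show -3 * ε * (-3 * ε) + 0 * 0 = (3 * ε) ^ 2 by ring]
    exact Real.sqrt_sq (by positivity)
  rw [hden, norm_div, norm_mul, norm_mul, habs1, habs2, habsd]
  have h2 : ‖(-3 : ℂ)‖ = 3 := by
    rw [norm_neg]; simp
  rw [h2]
  have hmax : max (Real.sqrt (ε ^ 2 + 4)) (Real.sqrt (ε ^ 2 + 1)) = Real.sqrt (ε ^ 2 + 4) := by
    rw [max_eq_left]; exact Real.sqrt_le_sqrt (by linarith)
  rw [hmax]
  have hs1 : 0 < Real.sqrt (ε ^ 2 + 4) := Real.sqrt_pos.mpr (by positivity)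
  have hs2 : (1 : ℝ) < Real.sqrt (ε ^ 2 + 1) := by
    exact (Real.lt_sqrt (by norm_num)).mpr (by nlinarith [pow_pos hεpos 2])
  rw [gt_iff_lt, lt_div_iff₀ (by positivity)]
  have hεα : ε * (α + 1) = 1 := by
    rw [hε]; field_simp
  nlinarith [mul_pos hεpos hα, mul_pos hs1 hεpos]
end
end

section
/- Let φ(z₁,z₂) = (−4z₁z₂² + z₂² + 3z₁z₂ − z₁ + z₂)/(z₂² − z₁z₂ − z₁ − 3z₂ + 4). Then φ(r,r) = r² for all r ∈ 𝔻 (where defined), and for every direction h with Re h₁ < 0, Re h₂ < 0, Dφ(1,1)[h] = lim_{t↓0}(φ(1+th₁,1+th₂)−1)/t = 2h₂; in particular the directional derivative at (1,1) is a linear function of h. -/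
open Complex Set Filter

noncomputable section

/-- the function
`φ₁(z) = (-4z₁z₂² + z₂² + 3z₁z₂ - z₁ + z₂)/(z₂² - z₁z₂ - z₁ - 3z₂ + 4)` satisfies
`φ₁(r,r) = r²` on the diagonal of 𝔻, and its directional derivative at `(1,1)` in every
direction `h` pointing into 𝔻² is `2h₂`, a linear function of `h`. -/
theorem stmt15
    (φ : ℂ → ℂ → ℂ)
    (hφ : ∀ z₁ z₂ : ℂ,
      φ z₁ z₂ = (-4 * z₁ * z₂ ^ 2 + z₂ ^ 2 + 3 * z₁ * z₂ - z₁ + z₂)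
        / (z₂ ^ 2 - z₁ * z₂ - z₁ - 3 * z₂ + 4)) :
    (∀ r : ℂ, ‖r‖ < 1 → φ r r = r ^ 2) ∧
    (∀ h₁ h₂ : ℂ, h₁.re < 0 → h₂.re < 0 →
      Tendsto (fun t : ℝ => (φ (1 + (t : ℂ) * h₁) (1 + (t : ℂ) * h₂) - 1) / (t : ℂ))
        (nhdsWithin 0 (Set.Ioi 0)) (nhds (2 * h₂))) := by
  constructor
  · intro r hr
    have h1 : r ≠ 1 := by
      intro h; rw [h] at hr; simp at hr
    have hd : r ^ 2 - r * r - r - 3 * r + 4 ≠ 0 := by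
      have e : r ^ 2 - r * r - r - 3 * r + 4 = 4 * (1 - r) := by ring
      rw [e]
      have : (1 : ℂ) - r ≠ 0 := sub_ne_zero.mpr (Ne.symm h1)
      simp [this]
    rw [hφ]
    rw [div_eq_iff hd]
    ring
  · intro h₁ h₂ hr1 hr2
    have hsne : h₁ + h₂ ≠ 0 := by
      intro h
      have : (h₁ + h₂).re = 0 := by rw [h]; simp
      rw [Complex.add_re] at this
      linarith
    have hsne2 : (-2 : ℂ) * (h₁ + h₂) ≠ 0 := by
      simp [hsne]
    -- the simplified difference quotient
    set g : ℝ → ℂ := fun t =>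
      (-4 * h₂ * ((h₁ + h₂) + (t : ℂ) * (h₁ * h₂))) /
        ((t : ℂ) * (h₂ ^ 2 - h₁ * h₂) - 2 * (h₁ + h₂)) with hg
    have hden : Tendsto (fun t : ℝ => (t : ℂ) * (h₂ ^ 2 - h₁ * h₂) - 2 * (h₁ + h₂))
        (nhdsWithin 0 (Set.Ioi 0)) (nhds ((-2 : ℂ) * (h₁ + h₂))) := by
      have : ContinuousAt (fun t : ℝ => (t : ℂ) * (h₂ ^ 2 - h₁ * h₂) - 2 * (h₁ + h₂)) 0 := by
        fun_prop
      have h0 := this.continuousWithinAt (s := Set.Ioi 0)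
      simpa using h0.tendsto
    have hnum : Tendsto (fun t : ℝ => -4 * h₂ * ((h₁ + h₂) + (t : ℂ) * (h₁ * h₂)))
        (nhdsWithin 0 (Set.Ioi 0)) (nhds (-4 * h₂ * (h₁ + h₂))) := by
      have : ContinuousAt (fun t : ℝ => -4 * h₂ * ((h₁ + h₂) + (t : ℂ) * (h₁ * h₂))) 0 := by
        fun_prop
      have h0 := this.continuousWithinAt (s := Set.Ioi 0)
      simpa using h0.tendsto
    have hglim : Tendsto g (nhdsWithin 0 (Set.Ioi 0)) (nhds (2 * h₂)) := by
      have := hnum.div hden hsne2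
      have hval : (-4 * h₂ * (h₁ + h₂)) / ((-2 : ℂ) * (h₁ + h₂)) = 2 * h₂ := by
        field_simp
        ring
      rw [hval] at this
      exact this
    have hev : ∀ᶠ t : ℝ in nhdsWithin 0 (Set.Ioi 0),
        (fun t : ℝ => (φ (1 + (t : ℂ) * h₁) (1 + (t : ℂ) * h₂) - 1) / (t : ℂ)) t = g t := by
      have hdne := hden.eventually_ne hsne2
      filter_upwards [hdne, self_mem_nhdsWithin] with t hfne ht
      have htne : (t : ℂ) ≠ 0 := by
        exact_mod_cast ne_of_gt (Set.mem_Ioi.mp ht)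
      have hDne : ((1 + (t : ℂ) * h₂) ^ 2 - (1 + (t : ℂ) * h₁) * (1 + (t : ℂ) * h₂)
          - (1 + (t : ℂ) * h₁) - 3 * (1 + (t : ℂ) * h₂) + 4) ≠ 0 := by
        have e : (1 + (t : ℂ) * h₂) ^ 2 - (1 + (t : ℂ) * h₁) * (1 + (t : ℂ) * h₂)
            - (1 + (t : ℂ) * h₁) - 3 * (1 + (t : ℂ) * h₂) + 4
            = (t : ℂ) * ((t : ℂ) * (h₂ ^ 2 - h₁ * h₂) - 2 * (h₁ + h₂)) := by ring
        rw [e]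
        exact mul_ne_zero htne hfne
      simp only [hφ, hg]
      rw [div_sub_one hDne, div_div, div_eq_div_iff (mul_ne_zero hDne htne) hfne]
      ring
    exact Tendsto.congr' (hev.mono fun t ht => ht.symm) hglim
end
end

section
/- For ζ ∈ ℂ \ [−1,1], ∫_{−1}^{1} (1−t²)/(t−ζ) dt = (1−ζ²)·log((ζ−1)/(ζ+1)) − 2ζ, where log is the principal branch (which is well-defined since (ζ−1)/(ζ+1) omits the negative real axis for ζ ∉ [−1,1]), and this function is bounded on ℂ \ [−1,1]. -/
open Complex Set intervalIntegral

noncomputable section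


lemma aux_ne {ζ : ℂ} (hζ : ζ ∉ ((fun t : ℝ => (t : ℂ)) '' Set.Icc (-1 : ℝ) 1))
    {t : ℝ} (ht : t ∈ Set.Icc (-1:ℝ) 1) : (t:ℂ) ≠ ζ :=
  fun h => hζ ⟨t, ht, h⟩

lemma aux_m1 {ζ : ℂ} (hζ : ζ ∉ ((fun t : ℝ => (t : ℂ)) '' Set.Icc (-1 : ℝ) 1)) :
    ζ + 1 ≠ 0 := by
  intro h
  exact aux_ne hζ (t := -1) (by norm_num) (by push_cast; linear_combination -h)

lemma aux_p1 {ζ : ℂ} (hζ : ζ ∉ ((fun t : ℝ => (t : ℂ)) '' Set.Icc (-1 : ℝ) 1)) :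
    ζ - 1 ≠ 0 := by
  intro h
  exact aux_ne hζ (t := 1) (by norm_num) (by push_cast; linear_combination -h)

lemma aux_slit {ζ : ℂ} (hζ : ζ ∉ ((fun t : ℝ => (t : ℂ)) '' Set.Icc (-1 : ℝ) 1))
    {t : ℝ} (ht : t ∈ Set.Icc (-1:ℝ) 1) : (ζ - t) / (ζ + 1) ∈ Complex.slitPlane := by
  by_contra h
  rw [Complex.mem_slitPlane_iff] at h
  push_neg at h
  obtain ⟨hre, him⟩ := h
  set z := (ζ - t) / (ζ + 1) with hz
  have hzr : z = (z.re : ℂ) := Complex.ext rfl (by simpa using him)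
  have hm1 := aux_m1 hζ
  have hzeq : ζ - (t:ℂ) = (z.re : ℂ) * (ζ + 1) := by
    rw [← hzr, hz]; field_simp
  set r := z.re with hr
  have h1r : (0:ℝ) < 1 - r := by linarith
  have h1rC : ((1:ℂ) - (r:ℂ)) ≠ 0 := by exact_mod_cast h1r.ne'
  have hs : (((t + r)/(1 - r) : ℝ) : ℂ) = ζ := by
    push_cast
    rw [div_eq_iff h1rC]
    linear_combination -hzeq
  refine hζ ⟨(t + r)/(1 - r), ⟨?_, ?_⟩, hs⟩
  · rw [le_div_iff₀ h1r]; nlinarith [ht.1]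
  · rw [div_le_one h1r]; linarith [ht.2]

lemma aux_int_inv {ζ : ℂ} (hζ : ζ ∉ ((fun t : ℝ => (t : ℂ)) '' Set.Icc (-1 : ℝ) 1)) :
    ∫ t in (-1:ℝ)..1, ((t:ℂ) - ζ)⁻¹ = Complex.log ((ζ - 1) / (ζ + 1)) := by
  have hm1 := aux_m1 hζ
  have hcont : ContinuousOn (fun t : ℝ => ((t:ℂ) - ζ)⁻¹) (Set.uIcc (-1:ℝ) 1) := by
    apply ContinuousOn.inv₀
    · exact (Complex.continuous_ofReal.continuousOn.sub continuousOn_const)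
    · intro t ht
      have ht' : t ∈ Set.Icc (-1:ℝ) 1 := by
        rwa [Set.uIcc_of_le (by norm_num : (-1:ℝ) ≤ 1)] at ht
      exact sub_ne_zero.mpr (aux_ne hζ ht')
  have key : ∀ t ∈ Set.uIcc (-1:ℝ) 1,
      HasDerivAt (fun t : ℝ => Complex.log ((ζ - t) / (ζ + 1))) ((t:ℂ) - ζ)⁻¹ t := by
    intro t ht
    have ht' : t ∈ Set.Icc (-1:ℝ) 1 := by
      rwa [Set.uIcc_of_le (by norm_num : (-1:ℝ) ≤ 1)] at ht
    have hslit := aux_slit hζ ht'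
    have hne : ζ - (t:ℂ) ≠ 0 := fun h => (aux_ne hζ ht') (by linear_combination -h)
    have hinner : HasDerivAt (fun z : ℂ => (ζ - z) / (ζ + 1)) (-1 / (ζ + 1)) (t:ℂ) :=
      ((hasDerivAt_id (t:ℂ)).const_sub ζ).div_const (ζ + 1)
    have hlog := (Complex.hasDerivAt_log hslit).comp (t:ℂ) hinner
    have := hlog.comp_ofReal
    have hne' : (t:ℂ) - ζ ≠ 0 := fun h => hne (by linear_combination -h)
    convert this using 1
    · rfl
    · field_simp
      ring
  have hint : IntervalIntegrable (fun t : ℝ => ((t:ℂ) - ζ)⁻¹) MeasureTheory.volume (-1) 1 :=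
    hcont.intervalIntegrable
  rw [intervalIntegral.integral_eq_sub_of_hasDerivAt key hint]
  push_cast
  rw [show ζ - -1 = ζ + 1 by ring, div_self hm1, Complex.log_one, sub_zero]

lemma aux_int {ζ : ℂ} (hζ : ζ ∉ ((fun t : ℝ => (t : ℂ)) '' Set.Icc (-1 : ℝ) 1)) :
    (∫ t in (-1 : ℝ)..1, (1 - (t : ℂ) ^ 2) / ((t : ℂ) - ζ))
      = (1 - ζ ^ 2) * Complex.log ((ζ - 1) / (ζ + 1)) - 2 * ζ := by
  have hcont : ContinuousOn (fun t : ℝ => ((t:ℂ) - ζ)⁻¹) (Set.uIcc (-1:ℝ) 1) := by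
    apply ContinuousOn.inv₀
    · exact (Complex.continuous_ofReal.continuousOn.sub continuousOn_const)
    · intro t ht
      have ht' : t ∈ Set.Icc (-1:ℝ) 1 := by
        rwa [Set.uIcc_of_le (by norm_num : (-1:ℝ) ≤ 1)] at ht
      exact sub_ne_zero.mpr (aux_ne hζ ht')
  have heq : Set.EqOn (fun t : ℝ => (1 - (t:ℂ)^2) / ((t:ℂ) - ζ))
      (fun t : ℝ => (-(t:ℂ) - ζ) + (1 - ζ^2) * ((t:ℂ) - ζ)⁻¹) (Set.uIcc (-1:ℝ) 1) := by
    intro t ht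
    have ht' : t ∈ Set.Icc (-1:ℝ) 1 := by
      rwa [Set.uIcc_of_le (by norm_num : (-1:ℝ) ≤ 1)] at ht
    have hne' : (t:ℂ) - ζ ≠ 0 := sub_ne_zero.mpr (aux_ne hζ ht')
    show (1 - (t:ℂ)^2) / ((t:ℂ) - ζ) = (-(t:ℂ) - ζ) + (1 - ζ^2) * ((t:ℂ) - ζ)⁻¹
    field_simp
    ring
  rw [intervalIntegral.integral_congr heq]
  have hint1 : IntervalIntegrable (fun t : ℝ => (-(t:ℂ) - ζ)) MeasureTheory.volume (-1) 1 := by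
    apply Continuous.intervalIntegrable
    continuity
  have hint2 : IntervalIntegrable (fun t : ℝ => (1 - ζ^2) * ((t:ℂ) - ζ)⁻¹)
      MeasureTheory.volume (-1) 1 := (hcont.intervalIntegrable).const_mul _
  rw [intervalIntegral.integral_add hint1 hint2,
    intervalIntegral.integral_const_mul, aux_int_inv hζ]
  have h1 : ∫ t in (-1:ℝ)..1, (-(t:ℂ) - ζ) = -(2 * ζ) := by
    have ha : IntervalIntegrable (fun t : ℝ => (-(t:ℂ))) MeasureTheory.volume (-1) 1 := by
      apply Continuous.intervalIntegrable; continuity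
    have hb : IntervalIntegrable (fun _ : ℝ => ζ) MeasureTheory.volume (-1) 1 :=
      intervalIntegrable_const
    rw [show (fun t : ℝ => (-(t:ℂ) - ζ)) = (fun t : ℝ => (-(t:ℂ)) - ζ) from rfl,
      intervalIntegral.integral_sub ha hb, intervalIntegral.integral_neg]
    have hc : ∫ t in (-1:ℝ)..1, ((t:ℝ):ℂ) = ((∫ t in (-1:ℝ)..1, t : ℝ) : ℂ) :=
      intervalIntegral.integral_ofReal
    rw [hc, integral_id, intervalIntegral.integral_const]
    norm_num
  rw [h1]
  ring

lemma aux_xlog {x : ℝ} (hx : 0 < x) (hx6 : x ≤ 6) : x * |Real.log x| ≤ 30 := by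
  rcases le_or_gt x 1 with h | h
  · have h1 : Real.log x ≤ 0 := Real.log_nonpos hx.le h
    have h3 : Real.log x⁻¹ ≤ x⁻¹ - 1 := Real.log_le_sub_one_of_pos (by positivity)
    rw [Real.log_inv] at h3
    rw [abs_of_nonpos h1]
    have h4 : x * (x⁻¹ - 1) = 1 - x := by field_simp
    nlinarith
  · have h3 : Real.log x ≤ x - 1 := Real.log_le_sub_one_of_pos hx
    rw [_root_.abs_of_nonneg (Real.log_nonneg h.le)]
    nlinarith

lemma aux_logabs (z : ℂ) :
    ‖Complex.log z‖ ≤ |Real.log ‖z‖| + Real.pi := by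
  calc ‖Complex.log z‖ ≤ |(Complex.log z).re| + |(Complex.log z).im| :=
      Complex.norm_le_abs_re_add_abs_im _
    _ ≤ _ := by
      rw [Complex.log_re, Complex.log_im]
      exact add_le_add_right (Complex.abs_arg_le_pi z) _

lemma aux_tri (x y : ℂ) : ‖x - y‖ ≤ ‖x‖ + ‖y‖ := by
  simpa using norm_sub_le x y

lemma aux_bdd {ζ : ℂ} (hζ : ζ ∉ ((fun t : ℝ => (t : ℂ)) '' Set.Icc (-1 : ℝ) 1)) :
    ‖(1 - ζ ^ 2) * Complex.log ((ζ - 1) / (ζ + 1)) - 2 * ζ‖ ≤ 1000 := by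
  have hm1 := aux_m1 hζ
  have hp1 := aux_p1 hζ
  set a := ‖ζ - 1‖ with ha
  set b := ‖ζ + 1‖ with hb
  have ha0 : 0 < a := norm_pos_iff.mpr hp1
  have hb0 : 0 < b := norm_pos_iff.mpr hm1
  have habs2 : ‖1 - ζ^2‖ = a * b := by
    rw [show (1 : ℂ) - ζ^2 = -((ζ-1)*(ζ+1)) by ring, norm_neg, norm_mul]
  rcases le_or_gt ‖ζ‖ 5 with hc | hc
  · -- |ζ| ≤ 5
    have ha6 : a ≤ 6 := by
      calc a = ‖ζ + (-1)‖ := by rw [ha]; ring_nf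
        _ ≤ ‖ζ‖ + ‖(-1:ℂ)‖ := norm_add_le _ _
        _ ≤ 6 := by simp; linarith
    have hb6 : b ≤ 6 := by
      calc b ≤ ‖ζ‖ + ‖(1:ℂ)‖ := norm_add_le _ _
        _ ≤ 6 := by simp; linarith
    have hlw : ‖Complex.log ((ζ-1)/(ζ+1))‖
        ≤ |Real.log a| + |Real.log b| + Real.pi := by
      refine le_trans (aux_logabs _) ?_
      rw [norm_div, Real.log_div ha0.ne' hb0.ne']
      exact add_le_add_left (abs_sub _ _) _
    have t1 : b * (a * |Real.log a|) ≤ 6 * 30 :=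
      mul_le_mul hb6 (aux_xlog ha0 ha6) (by positivity) (by norm_num)
    have t2 : a * (b * |Real.log b|) ≤ 6 * 30 :=
      mul_le_mul ha6 (aux_xlog hb0 hb6) (by positivity) (by norm_num)
    have hab36 : a * b ≤ 36 := by nlinarith
    have t3 : a * b * Real.pi ≤ 36 * 4 := by
      nlinarith [Real.pi_le_four, Real.pi_pos, hab36]
    calc ‖(1 - ζ ^ 2) * Complex.log ((ζ - 1) / (ζ + 1)) - 2 * ζ‖
        ≤ ‖(1 - ζ ^ 2) * Complex.log ((ζ - 1) / (ζ + 1))‖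
          + ‖2 * ζ‖ := aux_tri _ _
      _ = a * b * ‖Complex.log ((ζ-1)/(ζ+1))‖ + 2 * ‖ζ‖ := by
          rw [norm_mul, habs2, norm_mul]; norm_num
      _ ≤ 1000 := by
          have t0 : a * b * ‖Complex.log ((ζ-1)/(ζ+1))‖
              ≤ a * b * (|Real.log a| + |Real.log b| + Real.pi) :=
            mul_le_mul_of_nonneg_left hlw (by positivity)
          nlinarith [t0, t1, t2, t3, norm_nonneg ζ]
  · -- |ζ| > 5
    set z : ℂ := -2/(ζ+1) with hzdef
    have hb4 : 4 < b := by
      have : ‖ζ‖ ≤ b + 1 := by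
        calc ‖ζ‖ = ‖(ζ+1) + (-1)‖ := by ring_nf
          _ ≤ ‖ζ+1‖ + ‖(-1:ℂ)‖ := norm_add_le _ _
          _ = b + 1 := by simp [hb]
      linarith
    have hzn : ‖z‖ = 2 / b := by
      rw [hzdef, norm_div, ← hb]
      norm_num
    have hzle : ‖z‖ ≤ 1/2 := by
      rw [hzn, div_le_div_iff₀ hb0 (by norm_num)]
      linarith
    have hw : (ζ-1)/(ζ+1) = 1 + z := by
      rw [hzdef]
      field_simp
      ring
    have hR := Complex.norm_log_one_add_sub_self_le (show ‖z‖ < 1 by linarith)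
    set R := Complex.log (1+z) - z with hRdef
    have hinv : (1 - ‖z‖)⁻¹ ≤ 2 := by
      have h12 : (1:ℝ)/2 ≤ 1 - ‖z‖ := by linarith
      calc (1 - ‖z‖)⁻¹ ≤ ((1:ℝ)/2)⁻¹ := inv_anti₀ (by norm_num) h12
        _ = 2 := by norm_num
    have hRb : ‖R‖ ≤ 4 / b^2 := by
      calc ‖R‖ ≤ ‖z‖^2 * (1-‖z‖)⁻¹ / 2 := hR
        _ ≤ (2/b)^2 * 2 / 2 := by
            rw [hzn] at hinv ⊢
            gcongr
        _ = 4 / b^2 := by rw [div_pow]; ring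
    have hz' : (1 - ζ^2) * z = 2*ζ - 2 := by
      rw [hzdef, ← mul_div_assoc, div_eq_iff hm1]; ring
    have hg : (1 - ζ^2) * Complex.log ((ζ-1)/(ζ+1)) - 2*ζ = (1 - ζ^2) * R - 2 := by
      rw [hw, hRdef]
      linear_combination hz'
    have hab : a ≤ 3/2 * b := by
      have h1 : a ≤ ‖ζ‖ + 1 := by
        rw [ha, sub_eq_add_neg]
        exact (norm_add_le ζ (-1)).trans (by simp)
      have h2 : ‖ζ‖ - 1 ≤ b := by
        have : ‖ζ‖ ≤ b + 1 := by
          calc ‖ζ‖ = ‖(ζ+1) + (-1)‖ := by ring_nf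
            _ ≤ ‖ζ+1‖ + ‖(-1:ℂ)‖ := norm_add_le _ _
            _ = b + 1 := by simp [hb]
        linarith
      linarith
    have hb2R : b^2 * ‖R‖ ≤ 4 := by
      rw [mul_comm]
      exact (le_div_iff₀ (by positivity)).mp hRb
    rw [hg]
    calc ‖(1 - ζ^2) * R - 2‖
        ≤ ‖(1 - ζ^2) * R‖ + ‖(2:ℂ)‖ := aux_tri _ _
      _ = a * b * ‖R‖ + 2 := by
          rw [norm_mul, habs2]; norm_num
      _ ≤ 1000 := by
          nlinarith [hb2R, mul_nonneg (mul_nonneg hb0.le (norm_nonneg R))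
            (by linarith : (0:ℝ) ≤ 3/2*b - a)]

/-- for `ζ ∈ ℂ \ [-1,1]`,
`∫_{-1}^{1} (1-t²)/(t-ζ) dt = (1-ζ²)·log((ζ-1)/(ζ+1)) - 2ζ` (principal branch of log),
and this function is bounded on `ℂ \ [-1,1]`. -/
theorem stmt16 :
    (∀ ζ : ℂ, ζ ∉ ((fun t : ℝ => (t : ℂ)) '' Set.Icc (-1 : ℝ) 1) →
      (∫ t in (-1 : ℝ)..1, (1 - (t : ℂ) ^ 2) / ((t : ℂ) - ζ))
        = (1 - ζ ^ 2) * Complex.log ((ζ - 1) / (ζ + 1)) - 2 * ζ) ∧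
    ∃ B : ℝ, ∀ ζ : ℂ, ζ ∉ ((fun t : ℝ => (t : ℂ)) '' Set.Icc (-1 : ℝ) 1) →
      ‖(1 - ζ ^ 2) * Complex.log ((ζ - 1) / (ζ + 1)) - 2 * ζ‖ ≤ B := by
  exact ⟨fun ζ hζ => aux_int hζ, 1000, fun ζ hζ => aux_bdd hζ⟩
end
end

section
/- Let φ : 𝔻² → closure(𝔻) be a rational function, τ ∈ 𝕋² a B point for φ, and suppose the directional derivative Dφ(τ)[h] (which exists for all directions h into 𝔻² and equals −ω·conj(τ₂)h₂·η(conj(τ₂)h₂/(conj(τ₁)h₁)) for a function η with η and −wη(w) in the Pick class) is a rational function of h and satisfies |Dφ(τ)[h]| ≤ α·max(|h₁|,|h₂|) for some α > 0. Then Dφ(τ)[h] is a linear function of h, i.e., there exists λ ∈ ℂ² with Dφ(τ)[h] = λ₁h₁ + λ₂h₂ for all directions h into 𝔻². -/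
open Complex Set Filter

noncomputable section

/-- `h` is a direction pointing into 𝔻² at `τ`. -/
def IntoBidisk (τ h : ℂ × ℂ) : Prop :=
  ∃ t₀ > (0 : ℝ), ∀ t : ℝ, 0 < t → t < t₀ → τ + (t : ℂ) • h ∈ Bidisk

lemma coord_lt (τ h : ℂ) (hτ : ‖τ‖ = 1) (t : ℝ) (ht : 0 < t) :
    ‖τ + t*h‖ < 1 ↔ 2*((starRingEnd ℂ τ) * h).re + t * Complex.normSq h < 0 := by
  have h1 : ‖τ + t*h‖ < 1 ↔ Complex.normSq (τ + t*h) < 1 := by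
    rw [← Complex.sq_norm]
    constructor <;> intro hx <;> nlinarith [norm_nonneg (τ + t*h)]
  have h2 : Complex.normSq (τ + t*h) = 1 + 2*t*((starRingEnd ℂ τ) * h).re + t^2 * Complex.normSq h := by
    rw [Complex.normSq_add]
    have : Complex.normSq τ = 1 := by rw [Complex.normSq_eq_norm_sq, hτ]; norm_num
    rw [this]
    simp [Complex.normSq_mul, Complex.normSq_ofReal, Complex.mul_re, Complex.conj_re,
      Complex.conj_im, Complex.mul_im, Complex.ofReal_re, Complex.ofReal_im]
    ring
  rw [h1, h2]
  constructor <;> intro hx <;> nlinarith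

lemma intoBidisk_iff (τ h : ℂ × ℂ) (h1 : ‖τ.1‖ = 1) (h2 : ‖τ.2‖ = 1) :
    IntoBidisk τ h ↔ ((starRingEnd ℂ τ.1) * h.1).re < 0 ∧ ((starRingEnd ℂ τ.2) * h.2).re < 0 := by
  constructor
  · rintro ⟨t₀, ht₀, hmem⟩
    have hm := hmem (t₀/2) (by linarith) (by linarith)
    obtain ⟨m1, m2⟩ := hm
    simp only [Prod.fst_add, Prod.snd_add, Prod.smul_fst, Prod.smul_snd, smul_eq_mul] at m1 m2
    rw [coord_lt τ.1 h.1 h1 (t₀/2) (by linarith)] at m1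
    rw [coord_lt τ.2 h.2 h2 (t₀/2) (by linarith)] at m2
    constructor
    · nlinarith [Complex.normSq_nonneg h.1]
    · nlinarith [Complex.normSq_nonneg h.2]
  · rintro ⟨hr1, hr2⟩
    have hn1 : Complex.normSq h.1 ≠ 0 → 0 < Complex.normSq h.1 :=
      fun hh => lt_of_le_of_ne (Complex.normSq_nonneg _) (Ne.symm hh)
    -- choose t₀
    set A := ((starRingEnd ℂ τ.1) * h.1).re
    set B := ((starRingEnd ℂ τ.2) * h.2).re
    set a := Complex.normSq h.1
    set b := Complex.normSq h.2
    have ha : 0 ≤ a := Complex.normSq_nonneg _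
    have hb : 0 ≤ b := Complex.normSq_nonneg _
    have hpos1 : 0 < -A/(a+1) := div_pos (by linarith) (by linarith)
    have hpos2 : 0 < -B/(b+1) := div_pos (by linarith) (by linarith)
    refine ⟨min (-A/(a+1)) (-B/(b+1)), lt_min hpos1 hpos2, fun t ht htt => ?_⟩
    have ht1 : t < -A/(a+1) := lt_of_lt_of_le htt (min_le_left _ _)
    have ht2 : t < -B/(b+1) := lt_of_lt_of_le htt (min_le_right _ _)
    have k1 : t * (a+1) < -A := by
      rw [← lt_div_iff₀ (by positivity)]; exact ht1
    have k2 : t * (b+1) < -B := by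
      rw [← lt_div_iff₀ (by positivity)]; exact ht2
    constructor
    · show ‖τ.1 + t * h.1‖ < 1
      rw [coord_lt τ.1 h.1 h1 t ht]; nlinarith
    · show ‖τ.2 + t * h.2‖ < 1
      rw [coord_lt τ.2 h.2 h2 t ht]; nlinarith

lemma exists_c (w : ℂ) (hw : w.im ≠ 0 ∨ 0 < w.re) :
    ∃ c : ℂ, 0 < c.re ∧ 0 < (w*c).re := by
  refine ⟨starRingEnd ℂ w + ‖w‖, ?_, ?_⟩
  · have h1 : |w.re| ≤ ‖w‖ := Complex.abs_re_le_norm w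
    have h2 : w.re ^ 2 + w.im ^ 2 = (‖w‖)^2 := by
      rw [Complex.sq_norm, Complex.normSq_apply]; ring
    simp only [Complex.add_re, Complex.conj_re, Complex.ofReal_re]
    rcases hw with hw | hw
    · have him : 0 < w.im^2 := by rcases hw.lt_or_gt with h|h <;> nlinarith
      nlinarith [abs_nonneg w.re, norm_nonneg w, _root_.sq_abs w.re]
    · nlinarith [norm_nonneg w]
  · have hw0 : w ≠ 0 := by
      intro h; rcases hw with hw | hw <;> simp [h] at hw
    have : w * (starRingEnd ℂ w + ‖w‖) = (Complex.normSq w : ℂ) + w * ‖w‖ := by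
      rw [mul_add, Complex.mul_conj]
    rw [this]
    simp only [Complex.add_re, Complex.ofReal_re, Complex.mul_re, Complex.ofReal_im]
    have h1 : |w.re| ≤ ‖w‖ := Complex.abs_re_le_norm w
    have habs : 0 < ‖w‖ := norm_pos_iff.mpr hw0
    have h2 : w.re ^ 2 + w.im ^ 2 = (‖w‖)^2 := by
      rw [Complex.sq_norm, Complex.normSq_apply]; ring
    have hns : Complex.normSq w = (‖w‖)^2 := by
      rw [Complex.sq_norm]
    rw [hns]
    rcases hw with hw | hw
    · have him : 0 < w.im^2 := by rcases hw.lt_or_gt with h|h <;> nlinarith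
      nlinarith [abs_nonneg w.re, _root_.sq_abs w.re]
    · nlinarith


lemma eval_aeval_pair (p : MvPolynomial (Fin 2) ℂ) (A B w : ℂ) :
    Polynomial.eval w (MvPolynomial.aeval ![Polynomial.C A, Polynomial.C B * Polynomial.X] p)
      = MvPolynomial.eval ![A, B * w] p := by
  induction p using MvPolynomial.induction_on with
  | C a => simp
  | add p q hp hq => simp [hp, hq]
  | mul_X p i hp =>
      fin_cases i <;> simp [hp]

lemma vanish_of_forall_nat (f : Polynomial ℂ) (hf : ∀ n : ℕ, f.eval ((n:ℂ)+1) = 0) : f = 0 := by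
  apply Polynomial.eq_zero_of_infinite_isRoot
  apply Set.infinite_of_injective_forall_mem (f := fun n : ℕ => ((n:ℂ)+1))
    (hi := fun a b hab => by simpa using hab)
  intro n
  exact hf n

lemma tendsto_seq_norm : Tendsto (fun n : ℕ => ‖((n:ℂ)+1)‖) atTop atTop := by
  have : ∀ n : ℕ, ‖((n:ℂ)+1)‖ = (n:ℝ)+1 := by
    intro n
    have : ((n:ℂ)+1) = (((n:ℝ)+1 : ℝ) : ℂ) := by push_cast; ring
    rw [this, Complex.norm_real, Real.norm_of_nonneg (by positivity)]
  simp only [this]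
  exact tendsto_atTop_add_const_right _ _ tendsto_natCast_atTop_atTop

lemma tendsto_inv_seq (M : ℝ) : Tendsto (fun n : ℕ => M / ((n:ℝ)+1)) atTop (nhds 0) := by
  apply Tendsto.div_atTop tendsto_const_nhds
  exact tendsto_atTop_add_const_right _ _ tendsto_natCast_atTop_atTop

lemma poly_small (U : Polynomial ℂ) (M : ℝ)
    (h : ∀ n : ℕ, ‖U.eval ((n:ℂ)+1)‖ ≤ M / ((n:ℝ)+1)) : U = 0 := by
  by_contra hU
  rcases eq_or_ne U.natDegree 0 with hd | hd
  · have hC := Polynomial.eq_C_of_natDegree_eq_zero hd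
    have hle : ‖U.coeff 0‖ ≤ 0 := by
      apply le_of_tendsto_of_tendsto' (f := fun _ : ℕ => ‖U.coeff 0‖)
        tendsto_const_nhds (tendsto_inv_seq M)
      intro n
      have := h n
      rwa [hC, Polynomial.eval_C] at this
    have : U.coeff 0 = 0 := by
      have := norm_nonneg (U.coeff 0)
      exact norm_eq_zero.mp (le_antisymm hle this)
    rw [hC, this, map_zero] at hU
    exact hU rfl
  · have hdeg : 0 < U.degree := by
      rcases Polynomial.natDegree_pos_iff_degree_pos.mp (Nat.pos_of_ne_zero hd) with h
      exact h
    have htop : Tendsto (fun n : ℕ => ‖U.eval ((n:ℂ)+1)‖) atTop atTop :=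
      Polynomial.tendsto_norm_atTop U hdeg tendsto_seq_norm
    have hbd : ∀ n : ℕ, ‖U.eval ((n:ℂ)+1)‖ ≤ |M| := by
      intro n
      refine le_trans (by simpa using h n) ?_
      rw [div_le_iff₀ (by positivity)]
      nlinarith [le_abs_self M, abs_nonneg M, (Nat.cast_nonneg n : (0:ℝ) ≤ n)]
    obtain ⟨n, hn⟩ := (htop.eventually (eventually_ge_atTop (|M|+1))).exists
    have := hbd n
    linarith

lemma poly_deg_le_one (P : Polynomial ℂ) (M : ℝ)
    (h : ∀ n : ℕ, ‖P.eval ((n:ℂ)+1)‖ ≤ M * ((n:ℝ)+1)) :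
    P = Polynomial.C (P.coeff 0) + Polynomial.C (P.coeff 1) * Polynomial.X := by
  set a := P.coeff 0
  set b := P.coeff 1
  set T := P - Polynomial.C a - Polynomial.C b * Polynomial.X with hT
  have hdvd : Polynomial.X ^ 2 ∣ T := by
    rw [Polynomial.X_pow_dvd_iff]
    intro d hd
    interval_cases d <;>
      simp [hT, a, b, Polynomial.coeff_sub, Polynomial.coeff_C, Polynomial.coeff_C_mul]
  obtain ⟨U, hU⟩ := hdvd
  have hUz : U = 0 := by
    apply poly_small U (M + ‖a‖ + ‖b‖)
    intro n
    have hTn : T.eval ((n:ℂ)+1) = ((n:ℂ)+1)^2 * U.eval ((n:ℂ)+1) := by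
      rw [hU]; simp
    have habs : ‖T.eval ((n:ℂ)+1)‖ ≤ M * ((n:ℝ)+1) + ‖a‖ + ‖b‖ * ((n:ℝ)+1) := by
      have h1 : T.eval ((n:ℂ)+1) = P.eval ((n:ℂ)+1) - a - b * ((n:ℂ)+1) := by
        simp [hT]
      rw [h1]
      refine le_trans (norm_sub_le _ _) ?_
      gcongr
      · exact le_trans (norm_sub_le _ _) (by gcongr; exact h n)
      · rw [norm_mul]
        have : ‖(n:ℂ)+1‖ = (n:ℝ)+1 := by
          have : ((n:ℂ)+1) = (((n:ℝ)+1 : ℝ) : ℂ) := by push_cast; ring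
          rw [this, Complex.norm_real, Real.norm_of_nonneg (by positivity)]
        rw [this]
    have hn1 : (0:ℝ) < (n:ℝ)+1 := by positivity
    have habsn : ‖((n:ℂ)+1)^2‖ = ((n:ℝ)+1)^2 := by
      rw [norm_pow]
      have : ((n:ℂ)+1) = (((n:ℝ)+1 : ℝ) : ℂ) := by push_cast; ring
      rw [this, Complex.norm_real, Real.norm_of_nonneg (by positivity)]
    have key : ‖U.eval ((n:ℂ)+1)‖ * ((n:ℝ)+1)^2 ≤ M * ((n:ℝ)+1) + ‖a‖ + ‖b‖ * ((n:ℝ)+1) := by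
      calc ‖U.eval ((n:ℂ)+1)‖ * ((n:ℝ)+1)^2
          = ‖T.eval ((n:ℂ)+1)‖ := by rw [hTn, norm_mul, habsn]; ring
        _ ≤ _ := habs
    rw [le_div_iff₀ hn1]
    have hone : (1:ℝ) ≤ (n:ℝ)+1 := by simp [Nat.cast_nonneg]
    nlinarith [norm_nonneg (U.eval ((n:ℂ)+1)), norm_nonneg a, norm_nonneg b]
  rw [hUz, mul_zero] at hU
  have : P - Polynomial.C a - Polynomial.C b * Polynomial.X = 0 := hU
  linear_combination (norm := ring_nf) this


set_option maxHeartbeats 2000000 in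
/-- if `φ : 𝔻² → closure(𝔻)` is rational with a B point at `τ ∈ 𝕋²`, whose
directional derivative `Dφ(τ)[h] = -ω·conj(τ₂)h₂·η(conj(τ₂)h₂/(conj(τ₁)h₁))` (with `η` and
`-wη(w)` in the Pick class) is a rational function of `h` bounded by `α·‖h‖`, then
`Dφ(τ)[h]` is a linear function of `h`. -/
theorem stmt19 (φ : ℂ × ℂ → ℂ)
    -- φ is rational with no singularities in 𝔻²
    (P Q : MvPolynomial (Fin 2) ℂ)
    (hQ : ∀ z ∈ Bidisk, MvPolynomial.eval ![z.1, z.2] Q ≠ 0)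
    (hrat : ∀ z ∈ Bidisk,
      φ z = MvPolynomial.eval ![z.1, z.2] P / MvPolynomial.eval ![z.1, z.2] Q)
    (hφ_map : ∀ z ∈ Bidisk, ‖φ z‖ ≤ 1)
    (τ : ℂ × ℂ) (hτ : ‖τ.1‖ = 1 ∧ ‖τ.2‖ = 1)
    (ω : ℂ) (hω : ‖ω‖ = 1)
    -- B point: the Julia quotient has finite liminf at τ
    (hB : ∃ C : ℝ, ∀ ε > (0 : ℝ), ∃ z ∈ Bidisk,
      supNorm (z - τ) < ε ∧ 1 - ‖φ z‖ ≤ C * (1 - supNorm z))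
    -- the directional derivative D, as a limit of difference quotients
    (D : ℂ × ℂ → ℂ)
    (hD : ∀ h : ℂ × ℂ, IntoBidisk τ h →
      Tendsto (fun t : ℝ => (φ (τ + (t : ℂ) • h) - ω) / (t : ℂ))
        (nhdsWithin 0 (Set.Ioi 0)) (nhds (D h)))
    -- D is given by the slope function η, with η and -w·η(w) in the Pick class
    (η : ℂ → ℂ)
    (hη_hol : DifferentiableOn ℂ η {w : ℂ | 0 < w.im})
    (hη_pick : ∀ w : ℂ, 0 < w.im → 0 ≤ (η w).im)
    (hη_pick' : ∀ w : ℂ, 0 < w.im → 0 ≤ (-(w * η w)).im)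
    (hform : ∀ h : ℂ × ℂ, IntoBidisk τ h →
      D h = -ω * starRingEnd ℂ τ.2 * h.2 *
        η (starRingEnd ℂ τ.2 * h.2 / (starRingEnd ℂ τ.1 * h.1)))
    -- D is a rational function of h
    (p q : MvPolynomial (Fin 2) ℂ)
    (hq : ∀ h : ℂ × ℂ, IntoBidisk τ h → MvPolynomial.eval ![h.1, h.2] q ≠ 0)
    (hDrat : ∀ h : ℂ × ℂ, IntoBidisk τ h →
      D h = MvPolynomial.eval ![h.1, h.2] p / MvPolynomial.eval ![h.1, h.2] q)
    -- D is linearly bounded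
    (α : ℝ) (hα : 0 < α)
    (hbound : ∀ h : ℂ × ℂ, IntoBidisk τ h → ‖D h‖ ≤ α * supNorm h) :
    -- conclusion: D is linear
    ∃ l : ℂ × ℂ, ∀ h : ℂ × ℂ, IntoBidisk τ h → D h = l.1 * h.1 + l.2 * h.2 := by
  classical
  obtain ⟨hτ1, hτ2⟩ := hτ
  have hττ1 : starRingEnd ℂ τ.1 * τ.1 = 1 := by
    rw [mul_comm, Complex.mul_conj, Complex.normSq_eq_norm_sq, hτ1]; norm_num
  have hττ2 : starRingEnd ℂ τ.2 * τ.2 = 1 := by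
    rw [mul_comm, Complex.mul_conj, Complex.normSq_eq_norm_sq, hτ2]; norm_num
  -- chart membership
  have hmem : ∀ c w : ℂ, 0 < c.re → 0 < (w*c).re →
      IntoBidisk τ (-(c*τ.1), -(c*τ.2)*w) := by
    intro c w hc hwc
    rw [intoBidisk_iff _ _ hτ1 hτ2]
    have e1 : starRingEnd ℂ τ.1 * (-(c*τ.1)) = -c := by linear_combination (-c) * hττ1
    have e2 : starRingEnd ℂ τ.2 * (-(c*τ.2)*w) = -(w*c) := by
      linear_combination (-(c*w)) * hττ2
    show (starRingEnd ℂ τ.1 * (-(c*τ.1))).re < 0 ∧ (starRingEnd ℂ τ.2 * (-(c*τ.2)*w)).re < 0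
    rw [e1, e2]
    simp only [Complex.neg_re]
    constructor <;> linarith
  -- D at chart points via hform
  have hchartD : ∀ c w : ℂ, 0 < c.re → 0 < (w*c).re →
      D (-(c*τ.1), -(c*τ.2)*w) = ω * c * w * η w := by
    intro c w hc hwc
    have hmem' := hmem c w hc hwc
    have hf := hform ((-(c*τ.1), -(c*τ.2)*w) : ℂ × ℂ) hmem'
    have hc0 : c ≠ 0 := fun h0 => by simp [h0] at hc
    have e1 : starRingEnd ℂ τ.1 * (-(c*τ.1)) = -c := by linear_combination (-c) * hττ1
    have e2 : starRingEnd ℂ τ.2 * (-(c*τ.2)*w) = -(c*w) := by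
      linear_combination (-(c*w)) * hττ2
    have harg : starRingEnd ℂ τ.2 * (-(c*τ.2)*w) / (starRingEnd ℂ τ.1 * (-(c*τ.1))) = w := by
      rw [e1, e2, neg_div_neg_eq, mul_comm, mul_div_assoc, div_self hc0, mul_one]
    rw [hf]
    show -ω * starRingEnd ℂ τ.2 * (-(c*τ.2)*w) *
        η (starRingEnd ℂ τ.2 * (-(c*τ.2)*w) / (starRingEnd ℂ τ.1 * (-(c*τ.1)))) = ω * c * w * η w
    rw [harg]
    linear_combination (ω * η w * (c*w)) * hττ2
  -- rational charts
  set Pc : ℂ → Polynomial ℂ := fun c =>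
    MvPolynomial.aeval ![Polynomial.C (-(c*τ.1)), Polynomial.C (-(c*τ.2)) * Polynomial.X] p
    with hPcdef
  set Qc : ℂ → Polynomial ℂ := fun c =>
    MvPolynomial.aeval ![Polynomial.C (-(c*τ.1)), Polynomial.C (-(c*τ.2)) * Polynomial.X] q
    with hQcdef
  have hPeval : ∀ c w : ℂ, (Pc c).eval w = MvPolynomial.eval ![-(c*τ.1), -(c*τ.2)*w] p := by
    intro c w; rw [hPcdef]; exact eval_aeval_pair p _ _ w
  have hQeval : ∀ c w : ℂ, (Qc c).eval w = MvPolynomial.eval ![-(c*τ.1), -(c*τ.2)*w] q := by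
    intro c w; rw [hQcdef]; exact eval_aeval_pair q _ _ w
  have hchartQ : ∀ c w : ℂ, 0 < c.re → 0 < (w*c).re → (Qc c).eval w ≠ 0 := by
    intro c w hc hwc
    rw [hQeval]
    exact hq ((-(c*τ.1), -(c*τ.2)*w) : ℂ × ℂ) (hmem c w hc hwc)
  have hchartDrat : ∀ c w : ℂ, 0 < c.re → 0 < (w*c).re →
      D (-(c*τ.1), -(c*τ.2)*w) = (Pc c).eval w / (Qc c).eval w := by
    intro c w hc hwc
    rw [hPeval, hQeval]
    exact hDrat ((-(c*τ.1), -(c*τ.2)*w) : ℂ × ℂ) (hmem c w hc hwc)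
  -- gluing identity
  have hglue : ∀ c : ℂ, 0 < c.re → Pc c * Qc 1 = Polynomial.C c * (Pc 1 * Qc c) := by
    intro c hc
    have h0 : Pc c * Qc 1 - Polynomial.C c * (Pc 1 * Qc c) = 0 := by
      apply vanish_of_forall_nat
      intro n
      set w : ℂ := (n:ℂ)+1 with hwdef
      have hwim : w.im = 0 := by simp [hwdef]
      have hwre : 0 < w.re := by simp [hwdef]; positivity
      have hone : 0 < (1:ℂ).re := by norm_num
      have hw1 : 0 < (w*1).re := by simpa using hwre
      have hwc : 0 < (w*c).re := by
        have : (w*c).re = w.re * c.re := by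
          rw [Complex.mul_re, hwim]; ring
        rw [this]; exact mul_pos hwre hc
      have hc0 : c ≠ 0 := fun h0 => by simp [h0] at hc
      have d1 := hchartD 1 w hone hw1
      have dc := hchartD c w hc hwc
      have r1 := hchartDrat 1 w hone hw1
      have rc := hchartDrat c w hc hwc
      have q1 := hchartQ 1 w hone hw1
      have qc := hchartQ c w hc hwc
      have key : (Pc c).eval w * (Qc 1).eval w = c * ((Pc 1).eval w * (Qc c).eval w) := by
        have e1 : (Pc c).eval w = (ω * c * w * η w) * (Qc c).eval w := by
          rw [← dc, rc, div_mul_cancel₀ _ qc]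
        have e2 : (Pc 1).eval w = (ω * 1 * w * η w) * (Qc 1).eval w := by
          rw [← d1, r1, div_mul_cancel₀ _ q1]
        rw [e1, e2]; ring
      simp only [Polynomial.eval_sub, Polynomial.eval_mul, Polynomial.eval_C]
      linear_combination key
    linear_combination h0
  -- gcd reduction
  have hQ1ne : Qc 1 ≠ 0 := by
    intro hzero
    have := hchartQ 1 1 (by norm_num) (by norm_num)
    rw [hzero] at this
    simp at this
  set g : Polynomial ℂ := GCDMonoid.gcd (Pc 1) (Qc 1) with hgdef
  have hgne : g ≠ 0 := gcd_ne_zero_of_right hQ1ne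
  set P' : Polynomial ℂ := Pc 1 / g with hP'def
  set Q' : Polynomial ℂ := Qc 1 / g with hQ'def
  have hP'g : g * P' = Pc 1 := EuclideanDomain.mul_div_cancel' hgne (gcd_dvd_left _ _)
  have hQ'g : g * Q' = Qc 1 := EuclideanDomain.mul_div_cancel' hgne (gcd_dvd_right _ _)
  have hcop : IsCoprime P' Q' := isCoprime_div_gcd_div_gcd hQ1ne
  have hQ'ne : Q' ≠ 0 := by
    intro h0
    rw [h0, mul_zero] at hQ'g
    exact hQ1ne hQ'g.symm
  have hglue' : ∀ c : ℂ, 0 < c.re → Pc c * Q' = Polynomial.C c * (P' * Qc c) := by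
    intro c hc
    have hgl := hglue c hc
    rw [← hQ'g, ← hP'g] at hgl
    have h2 : g * (Pc c * Q' - Polynomial.C c * (P' * Qc c)) = 0 := by
      linear_combination hgl
    rcases mul_eq_zero.mp h2 with h0 | h0
    · exact absurd h0 hgne
    · linear_combination h0
  -- the linear bound for the reduced fraction
  have hbound' : ∀ w : ℂ, (w.im ≠ 0 ∨ 0 < w.re) →
      ‖P'.eval w‖ ≤ α * max 1 (‖w‖) * ‖Q'.eval w‖ := by
    intro w hw
    obtain ⟨c, hc, hwc⟩ := exists_c w hw
    have hmem' := hmem c w hc hwc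
    have hqc := hchartQ c w hc hwc
    have hrc := hchartDrat c w hc hwc
    have hb := hbound ((-(c*τ.1), -(c*τ.2)*w) : ℂ × ℂ) hmem'
    have hc0 : c ≠ 0 := fun h0 => by simp [h0] at hc
    have hcabs : 0 < ‖c‖ := norm_pos_iff.mpr hc0
    have hQabs : 0 < ‖(Qc c).eval w‖ := norm_pos_iff.mpr hqc
    have hsup : supNorm (-(c*τ.1), -(c*τ.2)*w) = ‖c‖ * max 1 (‖w‖) := by
      show max (‖-(c*τ.1)‖) (‖-(c*τ.2)*w‖) = _
      simp only [norm_neg, norm_mul, hτ1, hτ2, mul_one, one_mul]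
      rw [mul_max_of_nonneg _ _ (norm_nonneg c), mul_one]
    have h1 : ‖(Pc c).eval w‖ ≤
        α * (‖c‖ * max 1 (‖w‖)) * ‖(Qc c).eval w‖ := by
      rw [hrc, hsup, norm_div, div_le_iff₀ hQabs] at hb
      linarith
    have h2 := congrArg (Polynomial.eval w) (hglue' c hc)
    simp only [Polynomial.eval_mul, Polynomial.eval_C] at h2
    have h3 : ‖c‖ * (‖P'.eval w‖ * ‖(Qc c).eval w‖) =
        ‖(Pc c).eval w‖ * ‖Q'.eval w‖ := by
      have h2' := congrArg (fun z : ℂ => ‖z‖) h2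
      simp only [norm_mul] at h2'
      linarith
    have h4 : ‖(Pc c).eval w‖ * ‖Q'.eval w‖ ≤
        α * (‖c‖ * max 1 (‖w‖)) * ‖(Qc c).eval w‖ *
          ‖Q'.eval w‖ :=
      mul_le_mul_of_nonneg_right h1 (norm_nonneg _)
    rw [← h3] at h4
    have h5 : ‖c‖ * ‖(Qc c).eval w‖ > 0 := mul_pos hcabs hQabs
    nlinarith [norm_nonneg (P'.eval w), norm_nonneg (Q'.eval w)]
  -- Q' is a nonzero constant
  have hQ'c : ∃ k : ℂ, k ≠ 0 ∧ Q' = Polynomial.C k := by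
    have hdeg : Q'.natDegree = 0 := by
      by_contra hd
      have hdeg0 : 0 < Q'.degree := by
        rw [Polynomial.degree_eq_natDegree hQ'ne]
        exact_mod_cast Nat.pos_of_ne_zero hd
      obtain ⟨x, hx⟩ := Complex.exists_root hdeg0
      have hx0 : Q'.eval x = 0 := hx
      have hPx : P'.eval x ≠ 0 := by
        obtain ⟨A, B, hAB⟩ := hcop
        intro h0
        have hev := congrArg (Polynomial.eval x) hAB
        simp only [Polynomial.eval_add, Polynomial.eval_mul, Polynomial.eval_one, h0, hx0,
          mul_zero, add_zero, zero_add] at hev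
        exact absurd hev (by norm_num)
      set s : ℝ := if 0 ≤ x.im then 1 else -1 with hsdef
      set seq : ℕ → ℂ := fun n => x + ((s/((n:ℝ)+1) : ℝ) : ℂ) * Complex.I with hseqdef
      have him : ∀ n : ℕ, (seq n).im ≠ 0 := by
        intro n
        have heq : (seq n).im = x.im + s/((n:ℝ)+1) := by
          rw [hseqdef]
          simp only [Complex.add_im, Complex.mul_im, Complex.I_im, Complex.I_re,
            Complex.ofReal_re, Complex.ofReal_im]
          ring
        rw [heq, hsdef]
        have hpos : 0 < 1/((n:ℝ)+1) := by positivity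
        split_ifs with hxim
        · intro hcon; rw [div_eq_mul_inv, one_mul, ← one_div] at hcon; nlinarith
        · push_neg at hxim
          intro hcon
          have : (-1 : ℝ)/((n:ℝ)+1) = -(1/((n:ℝ)+1)) := by ring
          rw [this] at hcon
          nlinarith
      have hseq_tend : Tendsto seq atTop (nhds x) := by
        have h0 : Tendsto (fun n : ℕ => (s/((n:ℝ)+1) : ℝ)) atTop (nhds 0) := tendsto_inv_seq s
        have h1 : Tendsto (fun n : ℕ => ((s/((n:ℝ)+1) : ℝ) : ℂ)) atTop (nhds ((0:ℝ):ℂ)) :=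
          (Complex.continuous_ofReal.tendsto _).comp h0
        have h2 := (tendsto_const_nhds (x := x) (f := atTop (α := ℕ))).add
          (h1.mul_const Complex.I)
        simpa [hseqdef] using h2
      have hineq : ∀ n, ‖P'.eval (seq n)‖ ≤
          α * max 1 (‖seq n‖) * ‖Q'.eval (seq n)‖ :=
        fun n => hbound' (seq n) (Or.inl (him n))
      have l1 : Tendsto (fun n => ‖P'.eval (seq n)‖) atTop
          (nhds (‖P'.eval x‖)) :=
        ((continuous_norm.comp P'.continuous).tendsto x).comp hseq_tend
      have l2 : Tendsto (fun n => α * max 1 (‖seq n‖) * ‖Q'.eval (seq n)‖)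
          atTop (nhds 0) := by
        have hcont : Continuous fun z : ℂ =>
            α * max 1 (‖z‖) * ‖Q'.eval z‖ :=
          (continuous_const.mul (continuous_const.max continuous_norm)).mul
            (continuous_norm.comp Q'.continuous)
        have := (hcont.tendsto x).comp hseq_tend
        simpa [hx0, Function.comp_def] using this
      have hfin : ‖P'.eval x‖ ≤ 0 := le_of_tendsto_of_tendsto' l1 l2 hineq
      exact hPx (norm_eq_zero.mp (le_antisymm hfin (norm_nonneg _)))
    refine ⟨Q'.coeff 0, ?_, Polynomial.eq_C_of_natDegree_eq_zero hdeg⟩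
    intro h0
    exact hQ'ne (by rw [Polynomial.eq_C_of_natDegree_eq_zero hdeg, h0, map_zero])
  obtain ⟨k, hk0, hkQ⟩ := hQ'c
  -- P' is linear
  have hP'lin : P' = Polynomial.C (P'.coeff 0) + Polynomial.C (P'.coeff 1) * Polynomial.X := by
    apply poly_deg_le_one P' (α * ‖k‖)
    intro n
    have habs : ‖(n:ℂ)+1‖ = (n:ℝ)+1 := by
      have : ((n:ℂ)+1) = (((n:ℝ)+1 : ℝ) : ℂ) := by push_cast; ring
      rw [this, Complex.norm_real, Real.norm_of_nonneg (by positivity)]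
    have hwre : (0:ℝ) < (((n:ℂ)+1)).re := by simp; positivity
    have hb := hbound' ((n:ℂ)+1) (Or.inr hwre)
    rw [hkQ] at hb
    rw [Polynomial.eval_C] at hb
    rw [habs, max_eq_right (by simp [Nat.cast_nonneg] : (1:ℝ) ≤ (n:ℝ)+1)] at hb
    calc ‖P'.eval ((n:ℂ)+1)‖ ≤ α * ((n:ℝ)+1) * ‖k‖ := hb
      _ = α * ‖k‖ * ((n:ℝ)+1) := by ring
  -- final assembly
  set a : ℂ := P'.coeff 0 with hadef
  set b : ℂ := P'.coeff 1 with hbdef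
  refine ⟨(-(a/k) * starRingEnd ℂ τ.1, -(b/k) * starRingEnd ℂ τ.2), ?_⟩
  intro h hInto
  obtain ⟨hu, hv⟩ := (intoBidisk_iff τ h hτ1 hτ2).mp hInto
  have hune : starRingEnd ℂ τ.1 * h.1 ≠ 0 := fun h0 => by rw [h0] at hu; simp at hu
  set u : ℂ := starRingEnd ℂ τ.1 * h.1 with hudef
  set v : ℂ := starRingEnd ℂ τ.2 * h.2 with hvdef
  set w : ℂ := v / u with hwdef
  have hvw : v = w * u := (div_mul_cancel₀ v hune).symm
  have hw : w.im ≠ 0 ∨ 0 < w.re := by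
    by_cases him : w.im = 0
    · right
      have hre : v.re = w.re * u.re := by
        rw [hvw, Complex.mul_re, him]; ring
      nlinarith
    · left; exact him
  obtain ⟨c, hc, hwc⟩ := exists_c w hw
  have hc0 : c ≠ 0 := fun h0 => by simp [h0] at hc
  have hqc := hchartQ c w hc hwc
  have hrc := hchartDrat c w hc hwc
  have hdc := hchartD c w hc hwc
  have hPcc : (Pc c).eval w = (ω * c * w * η w) * (Qc c).eval w := by
    rw [← hdc, hrc, div_mul_cancel₀ _ hqc]
  have hg := congrArg (Polynomial.eval w) (hglue' c hc)
  rw [hP'lin, hkQ] at hg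
  simp only [Polynomial.eval_mul, Polynomial.eval_add, Polynomial.eval_C,
    Polynomial.eval_X] at hg
  have h2 : (ω * w * η w * k) * (c * (Qc c).eval w) = (a + b*w) * (c * (Qc c).eval w) := by
    rw [hPcc] at hg
    linear_combination hg
  have hkey : ω * w * η w * k = a + b * w :=
    mul_right_cancel₀ (mul_ne_zero hc0 hqc) h2
  have hDh := hform h hInto
  rw [hDh]
  show -ω * starRingEnd ℂ τ.2 * h.2 * η w =
    -(a/k) * starRingEnd ℂ τ.1 * h.1 + -(b/k) * starRingEnd ℂ τ.2 * h.2
  have hveq : starRingEnd ℂ τ.2 * h.2 = v := rfl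
  have hueq : starRingEnd ℂ τ.1 * h.1 = u := rfl
  have hkey2 : ω * (starRingEnd ℂ τ.2 * h.2) * η w * k =
      a * (starRingEnd ℂ τ.1 * h.1) + b * (starRingEnd ℂ τ.2 * h.2) := by
    linear_combination (starRingEnd ℂ τ.1 * h.1) * hkey + (ω * η w * k - b) * hvw
  have hr : -(a/k) * (starRingEnd ℂ τ.1) * h.1 + -(b/k) * (starRingEnd ℂ τ.2) * h.2 =
      (-(a * (starRingEnd ℂ τ.1 * h.1)) - b * (starRingEnd ℂ τ.2 * h.2))/k := by
    ring
  rw [hr, eq_div_iff hk0]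
  linear_combination -hkey2
end
end
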